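/- arXiv:1611.05264 — 5 statements merged into one kernel-verified Lean document; each statement's English description precedes it below -/
import Mathlib

section
/- On the 7-dimensional nilpotent Lie algebra g₂ = (0,0,0,0,23,34,36) (i.e., with de⁵ = e²³, de⁶ = e³⁴, de⁷ = e³⁶, de^i = 0 for i ≤ 4), every closed 4-form κ satisfies (ι_{e₅} ι_{e₇} κ)² = 0. -/
open scoped BigOperators

noncomputable section

/-- The basis `k`-form `e^{S 0} ∧ ⋯ ∧ e^{S (k-1)}` on `Fin n → ℝ` (determinant of the
selected coordinates). -/
def eForm {n k : ℕ} (S : Fin k → Fin n) :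
    AlternatingMap ℝ (Fin n → ℝ) ℝ (Fin k) :=
  (Matrix.detRowAlternating :
      AlternatingMap ℝ (Fin k → ℝ) ℝ (Fin k)).compLinearMap (LinearMap.funLeft ℝ ℝ S)

/-- The basis form `f^{S 0} ∧ ⋯`, in the coframe dual to a basis `b` of `V`. -/
def eFormB {V : Type*} [AddCommGroup V] [Module ℝ V] {n k : ℕ}
    (b : Module.Basis (Fin n) ℝ V) (S : Fin k → Fin n) : AlternatingMap ℝ V ℝ (Fin k) :=
  (eForm S).compLinearMap b.equivFun.toLinearMap

/-- Value of the wedge product `α ∧ β` at a tuple of vectors. -/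
def wedgeVal {V : Type*} [AddCommGroup V] [Module ℝ V] {p q : ℕ}
    (α : AlternatingMap ℝ V ℝ (Fin p)) (β : AlternatingMap ℝ V ℝ (Fin q))
    (x : Fin (p + q) → V) : ℝ :=
  ((p.factorial * q.factorial : ℕ) : ℝ)⁻¹ *
    ∑ σ : Equiv.Perm (Fin (p + q)),
      ((Equiv.Perm.sign σ : ℤ) : ℝ) *
        (α fun i => x (σ (Fin.castAdd q i))) * (β fun j => x (σ (Fin.natAdd p j)))

/-- Value of the triple wedge product `α ∧ β ∧ γ` at a tuple of vectors. -/
def wedge3Val {V : Type*} [AddCommGroup V] [Module ℝ V] {p q r : ℕ}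
    (α : AlternatingMap ℝ V ℝ (Fin p)) (β : AlternatingMap ℝ V ℝ (Fin q))
    (γ : AlternatingMap ℝ V ℝ (Fin r)) (x : Fin (p + q + r) → V) : ℝ :=
  ((p.factorial * q.factorial * r.factorial : ℕ) : ℝ)⁻¹ *
    ∑ σ : Equiv.Perm (Fin (p + q + r)),
      ((Equiv.Perm.sign σ : ℤ) : ℝ) *
        (α fun i => x (σ (Fin.castAdd r (Fin.castAdd q i)))) *
        (β fun j => x (σ (Fin.castAdd r (Fin.natAdd p j)))) *
        (γ fun l => x (σ (Fin.natAdd (p + q) l)))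

/-- Value of the Chevalley–Eilenberg differential of a `(k+1)`-form at a `(k+2)`-tuple of
vectors, for the Lie bracket `B`:
`(dκ)(x₀,…,x_{k+1}) = ∑_{i<j} (-1)^{i+j} κ([xᵢ,xⱼ], x₀,…,x̂ᵢ,…,x̂ⱼ,…)`. -/
def ceDVal {V : Type*} [AddCommGroup V] [Module ℝ V] (B : V → V → V) {k : ℕ}
    (κ : AlternatingMap ℝ V ℝ (Fin (k + 1))) (x : Fin (k + 2) → V) : ℝ :=
  ∑ i : Fin (k + 2), ∑ m : Fin (k + 1),
    if (i : ℕ) ≤ (m : ℕ) then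
      (-1 : ℝ) ^ ((i : ℕ) + ((i.succAbove m : Fin (k + 2)) : ℕ)) *
        κ (Fin.cons (B (x i) (x (i.succAbove m)))
            fun l : Fin k => x (i.succAbove (m.succAbove l)))
    else 0

/-- Inner product of `k`-forms on `Fin n → ℝ` making the standard basis forms orthonormal. -/
def formInner {n k : ℕ} (α β : AlternatingMap ℝ (Fin n → ℝ) ℝ (Fin k)) : ℝ :=
  ((k.factorial : ℕ) : ℝ)⁻¹ *
    ∑ f : Fin k → Fin n, (α fun i => Pi.single (f i) 1) * (β fun i => Pi.single (f i) 1)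

/-- Inner product of `k`-forms on `V` for which the coframe dual to `b` is orthonormal. -/
def formInnerB {V : Type*} [AddCommGroup V] [Module ℝ V] {n k : ℕ}
    (b : Module.Basis (Fin n) ℝ V) (α β : AlternatingMap ℝ V ℝ (Fin k)) : ℝ :=
  ((k.factorial : ℕ) : ℝ)⁻¹ *
    ∑ f : Fin k → Fin n, (α fun i => b (f i)) * (β fun i => b (f i))

/-- The standard positive (`G₂`) 3-form
`e¹²⁷+e³⁴⁷+e⁵⁶⁷+e¹³⁵−e¹⁴⁶−e²³⁶−e²⁴⁵` on `ℝ⁷` (indices written 1-based). -/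
def phiStd : AlternatingMap ℝ (Fin 7 → ℝ) ℝ (Fin 3) :=
  eForm ![0, 1, 6] + eForm ![2, 3, 6] + eForm ![4, 5, 6] + eForm ![0, 2, 4] -
    eForm ![0, 3, 5] - eForm ![1, 2, 5] - eForm ![1, 3, 4]

/-- The standard `G₂` dual 4-form
`e¹²³⁴+e¹²⁵⁶+e¹³⁶⁷+e¹⁴⁵⁷+e²³⁵⁷−e²⁴⁶⁷+e³⁴⁵⁶` on `ℝ⁷`. -/
def psiStd : AlternatingMap ℝ (Fin 7 → ℝ) ℝ (Fin 4) :=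
  eForm ![0, 1, 2, 3] + eForm ![0, 1, 4, 5] + eForm ![0, 2, 5, 6] + eForm ![0, 3, 4, 6] +
    eForm ![1, 2, 4, 6] - eForm ![1, 3, 5, 6] + eForm ![2, 3, 4, 5]

/-- The standard `G₂` 3-form in the coframe dual to a basis `b` of a 7-dimensional space;
a 3-form `φ` is positive (defines a `G₂`-structure) iff `φ = phiStdB b` for some basis `b`,
which is then orthonormal for the induced metric `g_φ`. -/
def phiStdB {V : Type*} [AddCommGroup V] [Module ℝ V] (b : Module.Basis (Fin 7) ℝ V) :
    AlternatingMap ℝ V ℝ (Fin 3) :=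
  phiStd.compLinearMap b.equivFun.toLinearMap

/-- The dual 4-form `⋆_φ φ` of the `G₂`-structure `phiStdB b`. -/
def psiStdB {V : Type*} [AddCommGroup V] [Module ℝ V] (b : Module.Basis (Fin 7) ℝ V) :
    AlternatingMap ℝ V ℝ (Fin 4) :=
  psiStd.compLinearMap b.equivFun.toLinearMap

/-- The standard negative stable 3-form `−f²⁴⁶+f¹³⁶+f¹⁴⁵+f²³⁵` on `ℝ⁶`. -/
def negStd : AlternatingMap ℝ (Fin 6 → ℝ) ℝ (Fin 3) :=
  -eForm ![1, 3, 5] + eForm ![0, 2, 5] + eForm ![0, 3, 4] + eForm ![1, 2, 4]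

/-- The standard negative stable 3-form in the coframe dual to a basis `b`;
a 3-form `ρ` on a 6-dimensional space is negative (λ(ρ)<0) iff `ρ = negStdB b` for some `b`. -/
def negStdB {V : Type*} [AddCommGroup V] [Module ℝ V] (b : Module.Basis (Fin 6) ℝ V) :
    AlternatingMap ℝ V ℝ (Fin 3) :=
  negStd.compLinearMap b.equivFun.toLinearMap

/-- The matrix of the Hitchin endomorphism `K_ρ` of a 3-form `ρ` on a 6-dimensional space,
relative to a basis `b` (trivializing `Λ⁶V*` by the dual volume form of `b`):
`ι_{b c} ρ ∧ ρ = ∑ₐ (−1)ᵃ (kMat b ρ a c) • ι_{b a} vol`. -/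
def kMat {V : Type*} [AddCommGroup V] [Module ℝ V] (b : Module.Basis (Fin 6) ℝ V)
    (ρ : AlternatingMap ℝ V ℝ (Fin 3)) (a c : Fin 6) : ℝ :=
  (-1 : ℝ) ^ (a : ℕ) *
    wedgeVal (ρ.curryLeft (b c)) ρ fun l : Fin 5 => b (a.succAbove l)

/-- The Hitchin quartic invariant `λ(ρ) = (1/6) tr(K_ρ²)`, trivialized by the basis `b`. -/
def lambdaB {V : Type*} [AddCommGroup V] [Module ℝ V] (b : Module.Basis (Fin 6) ℝ V)
    (ρ : AlternatingMap ℝ V ℝ (Fin 3)) : ℝ :=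
  (6 : ℝ)⁻¹ * ∑ a : Fin 6, ∑ c : Fin 6, kMat b ρ a c * kMat b ρ c a

/-- The standard volume form `e¹∧⋯∧e⁷` on `ℝ⁷`. -/
def vol7 : AlternatingMap ℝ (Fin 7 → ℝ) ℝ (Fin 7) :=
  eForm (fun i => i)


/-- The Lie bracket of the nilpotent Lie algebra `g₂ = (0,0,0,0,23,34,36)` on `ℝ⁷`
(so that the Chevalley–Eilenberg differential satisfies `de⁵ = e²³`, `de⁶ = e³⁴`,
`de⁷ = e³⁶`, `deⁱ = 0` for `i ≤ 4`). -/
def brkG2 : (Fin 7 → ℝ) → (Fin 7 → ℝ) → (Fin 7 → ℝ) := fun x y =>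
  ![0, 0, 0, 0, -(x 1 * y 2 - x 2 * y 1), -(x 2 * y 3 - x 3 * y 2), -(x 2 * y 5 - x 5 * y 2)]

namespace G2Aux

abbrev E (i : Fin 7) : Fin 7 → ℝ := Pi.single i 1

lemma cons_mat (κ : AlternatingMap ℝ (Fin 7 → ℝ) ℝ (Fin 4)) (v : Fin 7 → ℝ)
    (f : Fin 3 → Fin 7 → ℝ) :
    κ (Fin.cons v f) = κ ![v, f 0, f 1, f 2] := by
  congr 1; funext i; fin_cases i <;> rfl

lemma brk_eq (x y : Fin 7 → ℝ) : brkG2 x y =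
    (-(x 1 * y 2 - x 2 * y 1)) • E 4 + (-(x 2 * y 3 - x 3 * y 2)) • E 5 +
      (-(x 2 * y 5 - x 5 * y 2)) • E 6 := by
  funext i
  fin_cases i <;> simp [brkG2, Pi.single_apply, Matrix.cons_val_succ] <;> rfl

lemma brk_mat (κ : AlternatingMap ℝ (Fin 7 → ℝ) ℝ (Fin 4)) (x y b c d : Fin 7 → ℝ) :
    κ ![brkG2 x y, b, c, d] =
      (-(x 1 * y 2 - x 2 * y 1)) * κ ![E 4, b, c, d] +
        (-(x 2 * y 3 - x 3 * y 2)) * κ ![E 5, b, c, d] +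
          (-(x 2 * y 5 - x 5 * y 2)) * κ ![E 6, b, c, d] := by
  have h : ∀ v : Fin 7 → ℝ, κ ![v, b, c, d] = κ.curryLeft v ![b, c, d] := fun v => rfl
  rw [brk_eq, h, h, h, h]
  simp

lemma ceD5 (B : (Fin 7 → ℝ) → (Fin 7 → ℝ) → (Fin 7 → ℝ))
    (κ : AlternatingMap ℝ (Fin 7 → ℝ) ℝ (Fin 4)) (x : Fin 5 → (Fin 7 → ℝ)) :
    ceDVal B κ x =
      ∑ i : Fin 5, ∑ m : Fin 4,
        if (i : ℕ) ≤ (m : ℕ) then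
          (-1 : ℝ) ^ ((i : ℕ) + ((i.succAbove m : Fin 5) : ℕ)) *
            κ (Fin.cons (B (x i) (x (i.succAbove m)))
                fun l : Fin 3 => x (i.succAbove (m.succAbove l)))
        else 0 := rfl

lemma ceD_expand (B : (Fin 7 → ℝ) → (Fin 7 → ℝ) → (Fin 7 → ℝ))
    (κ : AlternatingMap ℝ (Fin 7 → ℝ) ℝ (Fin 4)) (x : Fin 5 → (Fin 7 → ℝ)) :
    ceDVal B κ x =
      -κ ![B (x 0) (x 1), x 2, x 3, x 4]
      + κ ![B (x 0) (x 2), x 1, x 3, x 4]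
      - κ ![B (x 0) (x 3), x 1, x 2, x 4]
      + κ ![B (x 0) (x 4), x 1, x 2, x 3]
      - κ ![B (x 1) (x 2), x 0, x 3, x 4]
      + κ ![B (x 1) (x 3), x 0, x 2, x 4]
      - κ ![B (x 1) (x 4), x 0, x 2, x 3]
      - κ ![B (x 2) (x 3), x 0, x 1, x 4]
      + κ ![B (x 2) (x 4), x 0, x 1, x 3]
      - κ ![B (x 3) (x 4), x 0, x 1, x 2] := by
  rw [ceD5 B κ x]
  simp only [Fin.sum_univ_five, Fin.sum_univ_four, cons_mat]
  simp (config := { decide := true }) only [Fin.succAbove, Fin.lt_def]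
  norm_num [show ((Fin.succ 2:Fin 5)) = 3 from rfl, show ((Fin.succ 2:Fin 5)).succ = 4 from rfl,
    show (Fin.succ 3 : Fin 5) = 4 from rfl,
    show ((Fin.castSucc (2:Fin 4)).succ : Fin 5) = 3 from rfl,
    show ((Fin.castSucc (2:Fin 4)).castSucc : Fin 5) = 2 from rfl,
    show (((3:Fin 5)):ℕ) = 3 from rfl, show (((4:Fin 5)):ℕ) = 4 from rfl,
    show (((3:Fin 4)):ℕ) = 3 from rfl,
    show ((Fin.succ (2:Fin 3)).succ : Fin 5) = 4 from rfl,
    show ((Fin.castSucc (2:Fin 3)).succ : Fin 5) = 3 from rfl,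
    show ((Fin.castSucc (2:Fin 3)).castSucc : Fin 5) = 2 from rfl]
  ring

section Dup
variable (κ : AlternatingMap ℝ (Fin 7 → ℝ) ℝ (Fin 4)) (a b c d : Fin 7 → ℝ)

lemma dup02 : κ ![a, b, a, d] = 0 := κ.map_eq_zero_of_eq _ (show ![a, b, a, d] (0:Fin 4) = ![a, b, a, d] 2 from rfl) (by decide : (0:Fin 4) ≠ 2)
lemma dup03 : κ ![a, b, c, a] = 0 := κ.map_eq_zero_of_eq _ (show ![a, b, c, a] (0:Fin 4) = ![a, b, c, a] 3 from rfl) (by decide : (0:Fin 4) ≠ 3)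
lemma dup12 : κ ![a, b, b, d] = 0 := κ.map_eq_zero_of_eq _ (show ![a, b, b, d] (1:Fin 4) = ![a, b, b, d] 2 from rfl) (by decide : (1:Fin 4) ≠ 2)
lemma dup13 : κ ![a, b, c, b] = 0 := κ.map_eq_zero_of_eq _ (show ![a, b, c, b] (1:Fin 4) = ![a, b, c, b] 3 from rfl) (by decide : (1:Fin 4) ≠ 3)
lemma dup23 : κ ![a, b, c, c] = 0 := κ.map_eq_zero_of_eq _ (show ![a, b, c, c] (2:Fin 4) = ![a, b, c, c] 3 from rfl) (by decide : (2:Fin 4) ≠ 3)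
lemma dup01 : κ ![a, a, c, d] = 0 := κ.map_eq_zero_of_eq _ (show ![a, a, c, d] (0:Fin 4) = ![a, a, c, d] 1 from rfl) (by decide : (0:Fin 4) ≠ 1)

lemma sw01 : κ ![a, b, c, d] = -κ ![b, a, c, d] := by
  have h := κ.map_swap (v := ![b, a, c, d]) (show (0:Fin 4) ≠ 1 by decide)
  rw [← h]
  congr 1
  funext k
  fin_cases k <;> simp [Equiv.swap_apply_def] <;> rfl

lemma sw12 : κ ![a, b, c, d] = -κ ![a, c, b, d] := by
  have h := κ.map_swap (v := ![a, c, b, d]) (show (1:Fin 4) ≠ 2 by decide)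
  rw [← h]
  congr 1
  funext k
  fin_cases k <;> simp [Equiv.swap_apply_def] <;> rfl

lemma sw23 : κ ![a, b, c, d] = -κ ![a, b, d, c] := by
  have h := κ.map_swap (v := ![a, b, d, c]) (show (2:Fin 4) ≠ 3 by decide)
  rw [← h]
  congr 1
  funext k
  fin_cases k <;> simp [Equiv.swap_apply_def] <;> rfl

lemma rev4 : κ ![a, b, c, d] = κ ![d, c, b, a] := by
  rw [sw23, sw12, sw01, sw23, sw12, sw23]; ring

lemma rot3 : κ ![a, b, c, d] = κ ![a, d, b, c] := by
  rw [sw23, sw12]; ring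

lemma rot4 : κ ![a, b, c, d] = -κ ![d, a, b, c] := by
  rw [sw23, sw12, sw01]; ring

end Dup


lemma ceD_expandE (B : (Fin 7 → ℝ) → (Fin 7 → ℝ) → (Fin 7 → ℝ))
    (κ : AlternatingMap ℝ (Fin 7 → ℝ) ℝ (Fin 4)) (v0 v1 v2 v3 v4 : Fin 7 → ℝ) :
    ceDVal B κ ![v0, v1, v2, v3, v4] =
      -κ ![B v0 v1, v2, v3, v4]
      + κ ![B v0 v2, v1, v3, v4]
      - κ ![B v0 v3, v1, v2, v4]
      + κ ![B v0 v4, v1, v2, v3]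
      - κ ![B v1 v2, v0, v3, v4]
      + κ ![B v1 v3, v0, v2, v4]
      - κ ![B v1 v4, v0, v2, v3]
      - κ ![B v2 v3, v0, v1, v4]
      + κ ![B v2 v4, v0, v1, v3]
      - κ ![B v3 v4, v0, v1, v2] := by
  rw [ceD_expand]
  rfl

lemma upd2_eq (u v a b z : Fin 7 → ℝ) : Function.update ![u, v, a, b] 2 z = ![u, v, z, b] := by
  funext k; fin_cases k <;> simp [Function.update]

lemma upd3_eq (u v a b z : Fin 7 → ℝ) : Function.update ![u, v, a, b] 3 z = ![u, v, a, z] := by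
  funext k; fin_cases k <;> simp [Function.update]

lemma sum_single (w : Fin 7 → ℝ) : ∑ i : Fin 7, w i • E i = w := by
  funext j
  rw [Finset.sum_apply]
  simp [Pi.single_apply]

lemma expand_last2 (κ : AlternatingMap ℝ (Fin 7 → ℝ) ℝ (Fin 4)) (u v a b : Fin 7 → ℝ) :
    κ ![u, v, a, b] = ∑ i : Fin 7, ∑ j : Fin 7, a i * b j * κ ![u, v, E i, E j] := by
  have h1 : ∀ c d : Fin 7 → ℝ, κ ![u, v, c, d] = ∑ j : Fin 7, d j * κ ![u, v, c, E j] := by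
    intro c d
    calc κ ![u, v, c, d] = κ (Function.update ![u, v, c, d] 3 (∑ j : Fin 7, d j • E j)) := by
          rw [sum_single, upd3_eq]
      _ = ∑ j : Fin 7, κ (Function.update ![u, v, c, d] 3 (d j • E j)) :=
          κ.map_update_sum Finset.univ 3 _ _
      _ = ∑ j : Fin 7, d j * κ ![u, v, c, E j] := by
          refine Finset.sum_congr rfl fun j _ => ?_
          rw [AlternatingMap.map_update_smul, upd3_eq, smul_eq_mul]
  calc κ ![u, v, a, b] = κ (Function.update ![u, v, a, b] 2 (∑ i : Fin 7, a i • E i)) := by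
        rw [sum_single, upd2_eq]
    _ = ∑ i : Fin 7, κ (Function.update ![u, v, a, b] 2 (a i • E i)) :=
        κ.map_update_sum Finset.univ 2 _ _
    _ = ∑ i : Fin 7, ∑ j : Fin 7, a i * b j * κ ![u, v, E i, E j] := by
        refine Finset.sum_congr rfl fun i _ => ?_
        rw [AlternatingMap.map_update_smul, upd2_eq, smul_eq_mul, h1 (E i) b, Finset.mul_sum]
        refine Finset.sum_congr rfl fun j _ => ?_
        ring

section Rel
variable (κ : AlternatingMap ℝ (Fin 7 → ℝ) ℝ (Fin 4))
  (hκ : ∀ x : Fin 5 → (Fin 7 → ℝ), ceDVal brkG2 κ x = 0)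
include hκ

lemma r05 : κ ![E 6, E 4, E 0, E 5] = 0 := by
  have h := hκ ![E 0, E 2, E 3, E 4, E 6]
  rw [ceD_expandE] at h
  simp only [brk_mat] at h
  norm_num [Pi.single_apply, Fin.ext_iff, dup01, dup02, dup03, dup12, dup13, dup23,
    show ((0:Fin 7):ℕ)=0 from rfl, show ((1:Fin 7):ℕ)=1 from rfl, show ((2:Fin 7):ℕ)=2 from rfl,
    show ((3:Fin 7):ℕ)=3 from rfl, show ((4:Fin 7):ℕ)=4 from rfl, show ((5:Fin 7):ℕ)=5 from rfl,
    show ((6:Fin 7):ℕ)=6 from rfl] at h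
  have h2 := rev4 κ (E 6) (E 4) (E 0) (E 5)
  linarith

lemma r15 : κ ![E 6, E 4, E 1, E 5] = 0 := by
  have h := hκ ![E 1, E 2, E 3, E 4, E 6]
  rw [ceD_expandE] at h
  simp only [brk_mat] at h
  norm_num [Pi.single_apply, Fin.ext_iff, dup01, dup02, dup03, dup12, dup13, dup23,
    show ((0:Fin 7):ℕ)=0 from rfl, show ((1:Fin 7):ℕ)=1 from rfl, show ((2:Fin 7):ℕ)=2 from rfl,
    show ((3:Fin 7):ℕ)=3 from rfl, show ((4:Fin 7):ℕ)=4 from rfl, show ((5:Fin 7):ℕ)=5 from rfl,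
    show ((6:Fin 7):ℕ)=6 from rfl] at h
  have h2 := rev4 κ (E 6) (E 4) (E 1) (E 5)
  linarith

lemma r01 : κ ![E 6, E 4, E 0, E 1] = 0 := by
  have h := hκ ![E 0, E 1, E 2, E 4, E 5]
  rw [ceD_expandE] at h
  simp only [brk_mat] at h
  norm_num [Pi.single_apply, Fin.ext_iff, dup01, dup02, dup03, dup12, dup13, dup23,
    show ((0:Fin 7):ℕ)=0 from rfl, show ((1:Fin 7):ℕ)=1 from rfl, show ((2:Fin 7):ℕ)=2 from rfl,
    show ((3:Fin 7):ℕ)=3 from rfl, show ((4:Fin 7):ℕ)=4 from rfl, show ((5:Fin 7):ℕ)=5 from rfl,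
    show ((6:Fin 7):ℕ)=6 from rfl] at h
  have h2 := rot3 κ (E 6) (E 0) (E 1) (E 4)
  linarith

lemma r03 : κ ![E 6, E 4, E 0, E 3] = 0 := by
  have h := hκ ![E 0, E 2, E 3, E 4, E 5]
  rw [ceD_expandE] at h
  simp only [brk_mat] at h
  norm_num [Pi.single_apply, Fin.ext_iff, dup01, dup02, dup03, dup12, dup13, dup23,
    show ((0:Fin 7):ℕ)=0 from rfl, show ((1:Fin 7):ℕ)=1 from rfl, show ((2:Fin 7):ℕ)=2 from rfl,
    show ((3:Fin 7):ℕ)=3 from rfl, show ((4:Fin 7):ℕ)=4 from rfl, show ((5:Fin 7):ℕ)=5 from rfl,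
    show ((6:Fin 7):ℕ)=6 from rfl] at h
  have h2 := rot3 κ (E 6) (E 0) (E 3) (E 4)
  linarith

lemma r13 : κ ![E 6, E 4, E 1, E 3] = 0 := by
  have h := hκ ![E 1, E 2, E 3, E 4, E 5]
  rw [ceD_expandE] at h
  simp only [brk_mat] at h
  norm_num [Pi.single_apply, Fin.ext_iff, dup01, dup02, dup03, dup12, dup13, dup23,
    show ((0:Fin 7):ℕ)=0 from rfl, show ((1:Fin 7):ℕ)=1 from rfl, show ((2:Fin 7):ℕ)=2 from rfl,
    show ((3:Fin 7):ℕ)=3 from rfl, show ((4:Fin 7):ℕ)=4 from rfl, show ((5:Fin 7):ℕ)=5 from rfl,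
    show ((6:Fin 7):ℕ)=6 from rfl] at h
  have h2 := rot3 κ (E 6) (E 1) (E 3) (E 4)
  linarith

lemma r35 : κ ![E 6, E 4, E 3, E 5] = 0 := by
  have h := hκ ![E 1, E 2, E 3, E 5, E 6]
  rw [ceD_expandE] at h
  simp only [brk_mat] at h
  norm_num [Pi.single_apply, Fin.ext_iff, dup01, dup02, dup03, dup12, dup13, dup23,
    show ((0:Fin 7):ℕ)=0 from rfl, show ((1:Fin 7):ℕ)=1 from rfl, show ((2:Fin 7):ℕ)=2 from rfl,
    show ((3:Fin 7):ℕ)=3 from rfl, show ((4:Fin 7):ℕ)=4 from rfl, show ((5:Fin 7):ℕ)=5 from rfl,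
    show ((6:Fin 7):ℕ)=6 from rfl] at h
  have h2 := rot4 κ (E 4) (E 3) (E 5) (E 6)
  linarith

lemma hbmain (a b : Fin 7 → ℝ) :
    κ ![E 6, E 4, a, b] =
      a 2 * (κ ![E 6, E 4, E 2, E 0] * b 0 + κ ![E 6, E 4, E 2, E 1] * b 1 +
             κ ![E 6, E 4, E 2, E 3] * b 3 + κ ![E 6, E 4, E 2, E 5] * b 5)
    - b 2 * (κ ![E 6, E 4, E 2, E 0] * a 0 + κ ![E 6, E 4, E 2, E 1] * a 1 +
             κ ![E 6, E 4, E 2, E 3] * a 3 + κ ![E 6, E 4, E 2, E 5] * a 5) := by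
  have z10 : κ ![E 6, E 4, E 1, E 0] = 0 := by rw [sw23]; rw [r01 κ hκ]; ring
  have z30 : κ ![E 6, E 4, E 3, E 0] = 0 := by rw [sw23]; rw [r03 κ hκ]; ring
  have z31 : κ ![E 6, E 4, E 3, E 1] = 0 := by rw [sw23]; rw [r13 κ hκ]; ring
  have z50 : κ ![E 6, E 4, E 5, E 0] = 0 := by rw [sw23]; rw [r05 κ hκ]; ring
  have z51 : κ ![E 6, E 4, E 5, E 1] = 0 := by rw [sw23]; rw [r15 κ hκ]; ring
  have z53 : κ ![E 6, E 4, E 5, E 3] = 0 := by rw [sw23]; rw [r35 κ hκ]; ring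
  have s0 : κ ![E 6, E 4, E 0, E 2] = -κ ![E 6, E 4, E 2, E 0] := sw23 κ _ _ _ _
  have s1 : κ ![E 6, E 4, E 1, E 2] = -κ ![E 6, E 4, E 2, E 1] := sw23 κ _ _ _ _
  have s3 : κ ![E 6, E 4, E 3, E 2] = -κ ![E 6, E 4, E 2, E 3] := sw23 κ _ _ _ _
  have s5 : κ ![E 6, E 4, E 5, E 2] = -κ ![E 6, E 4, E 2, E 5] := sw23 κ _ _ _ _
  rw [expand_last2]
  simp only [Fin.sum_univ_seven]
  rw [z10, z30, z31, z50, z51, z53, s0, s1, s3, s5, r01 κ hκ, r03 κ hκ, r13 κ hκ,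
    r05 κ hκ, r15 κ hκ, r35 κ hκ]
  simp only [dup02 κ, dup03 κ, dup12 κ, dup13 κ, dup23 κ]
  ring

end Rel

lemma perm_sum_zero (f : Fin 4 → (Fin 7 → ℝ) → ℝ) (x : Fin 4 → Fin 7 → ℝ) (i j : Fin 4)
    (hij : i ≠ j) (hf : f i = f j) :
    ∑ σ : Equiv.Perm (Fin 4),
      ((Equiv.Perm.sign σ : ℤ) : ℝ) * ∏ k : Fin 4, f k (x (σ k)) = 0 := by
  apply Finset.sum_ninvolution (g := fun σ => σ * Equiv.swap i j)
  · intro σ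
    have hsign : ((Equiv.Perm.sign (σ * Equiv.swap i j) : ℤ) : ℝ) =
        -((Equiv.Perm.sign σ : ℤ) : ℝ) := by
      rw [Equiv.Perm.sign_mul, Equiv.Perm.sign_swap hij]
      push_cast
      ring
    have hfs : ∀ k, f (Equiv.swap i j k) = f k := by
      intro k
      rcases eq_or_ne k i with rfl | hki
      · rw [Equiv.swap_apply_left]; exact hf.symm
      rcases eq_or_ne k j with rfl | hkj
      · rw [Equiv.swap_apply_right]; exact hf
      · rw [Equiv.swap_apply_of_ne_of_ne hki hkj]
    have hprod : ∏ k : Fin 4, f k (x ((σ * Equiv.swap i j) k)) = ∏ k : Fin 4, f k (x (σ k)) := by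
      calc ∏ k : Fin 4, f k (x ((σ * Equiv.swap i j) k))
          = ∏ k : Fin 4, f (Equiv.swap i j k) (x (σ (Equiv.swap i j k))) :=
            Finset.prod_congr rfl fun k _ => by rw [hfs]; rfl
        _ = ∏ k : Fin 4, f k (x (σ k)) := Equiv.prod_comp (Equiv.swap i j) fun k => f k (x (σ k))
    rw [hprod, hsign]
    ring
  · intro σ _ h
    have h1 : σ * Equiv.swap i j = σ * 1 := by rw [mul_one]; exact h
    have h2 : Equiv.swap i j = 1 := mul_left_cancel h1
    apply hij
    have := congrArg (fun e : Equiv.Perm (Fin 4) => e i) h2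
    exact (by simpa using this : j = i).symm
  · intro σ; exact Finset.mem_univ _
  · intro σ; rw [mul_assoc, Equiv.swap_mul_self, mul_one]

lemma sum_B_zero (μ ν : (Fin 7 → ℝ) → ℝ) (x : Fin 4 → Fin 7 → ℝ) :
    ∑ σ : Equiv.Perm (Fin 4),
      ((Equiv.Perm.sign σ : ℤ) : ℝ) *
        ((μ (x (σ 0)) * ν (x (σ 1)) - μ (x (σ 1)) * ν (x (σ 0))) *
          (μ (x (σ 2)) * ν (x (σ 3)) - μ (x (σ 3)) * ν (x (σ 2)))) = 0 := by
  have h1 := perm_sum_zero ![μ, ν, μ, ν] x 0 2 (by decide) rfl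
  have h2 := perm_sum_zero ![μ, ν, ν, μ] x 0 3 (by decide) rfl
  have h3 := perm_sum_zero ![ν, μ, μ, ν] x 1 2 (by decide) rfl
  have h4 := perm_sum_zero ![ν, μ, ν, μ] x 0 2 (by decide) rfl
  simp only [Fin.prod_univ_four, Matrix.cons_val_zero, Matrix.cons_val_one, Matrix.cons_val_two,
    Matrix.cons_val_three, Matrix.head_cons] at h1 h2 h3 h4
  norm_num at h1 h2 h3 h4
  have key : ∀ σ : Equiv.Perm (Fin 4),
      ((Equiv.Perm.sign σ : ℤ) : ℝ) *
        ((μ (x (σ 0)) * ν (x (σ 1)) - μ (x (σ 1)) * ν (x (σ 0))) *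
          (μ (x (σ 2)) * ν (x (σ 3)) - μ (x (σ 3)) * ν (x (σ 2)))) =
      ((Equiv.Perm.sign σ : ℤ) : ℝ) * (μ (x (σ 0)) * ν (x (σ 1)) * μ (x (σ 2)) * ν (x (σ 3)))
      - ((Equiv.Perm.sign σ : ℤ) : ℝ) * (μ (x (σ 0)) * ν (x (σ 1)) * ν (x (σ 2)) * μ (x (σ 3)))
      - ((Equiv.Perm.sign σ : ℤ) : ℝ) * (ν (x (σ 0)) * μ (x (σ 1)) * μ (x (σ 2)) * ν (x (σ 3)))
      + ((Equiv.Perm.sign σ : ℤ) : ℝ) * (ν (x (σ 0)) * μ (x (σ 1)) * ν (x (σ 2)) * μ (x (σ 3))) :=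
    fun σ => by ring
  rw [Finset.sum_congr rfl fun σ _ => key σ]
  rw [Finset.sum_add_distrib, Finset.sum_sub_distrib, Finset.sum_sub_distrib]
  rw [h1, h2, h3, h4]
  ring


end G2Aux


set_option maxHeartbeats 2000000 in
/-- On `g₂ = (0,0,0,0,23,34,36)`, every closed 4-form `κ` satisfies
`(ι_{e₅} ι_{e₇} κ)² = 0`. -/
theorem g2_closed_four_form_contraction_sq_zero
    (κ : AlternatingMap ℝ (Fin 7 → ℝ) ℝ (Fin 4))
    (hκ : ∀ x : Fin 5 → (Fin 7 → ℝ), ceDVal brkG2 κ x = 0) :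
    ∀ x : Fin 4 → (Fin 7 → ℝ),
      wedgeVal ((κ.curryLeft (Pi.single 6 1)).curryLeft (Pi.single 4 1))
        ((κ.curryLeft (Pi.single 6 1)).curryLeft (Pi.single 4 1)) x = 0 := by
  intro x
  have hB2 : ∀ g : Fin 2 → Fin 7 → ℝ,
      ((κ.curryLeft (Pi.single 6 1)).curryLeft (Pi.single 4 1)) g =
        κ ![G2Aux.E 6, G2Aux.E 4, g 0, g 1] := by
    intro g
    show κ (Matrix.vecCons (Pi.single 6 1) (Matrix.vecCons (Pi.single 4 1) g)) = _
    congr 1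
    funext k
    fin_cases k <;> rfl
  have key := G2Aux.sum_B_zero (fun v => v 2)
    (fun v => κ ![G2Aux.E 6, G2Aux.E 4, G2Aux.E 2, G2Aux.E 0] * v 0 +
      κ ![G2Aux.E 6, G2Aux.E 4, G2Aux.E 2, G2Aux.E 1] * v 1 +
      κ ![G2Aux.E 6, G2Aux.E 4, G2Aux.E 2, G2Aux.E 3] * v 3 +
      κ ![G2Aux.E 6, G2Aux.E 4, G2Aux.E 2, G2Aux.E 5] * v 5) x
  simp only [wedgeVal]
  have hsum : ∑ σ : Equiv.Perm (Fin (2 + 2)),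
      ((Equiv.Perm.sign σ : ℤ) : ℝ) *
        (((κ.curryLeft (Pi.single 6 1)).curryLeft (Pi.single 4 1)) fun i =>
            x (σ (Fin.castAdd 2 i))) *
        (((κ.curryLeft (Pi.single 6 1)).curryLeft (Pi.single 4 1)) fun j =>
            x (σ (Fin.natAdd 2 j))) = 0 := by
    rw [← key]
    refine Finset.sum_congr rfl fun σ _ => ?_
    rw [hB2, hB2]
    simp only [show (Fin.castAdd 2 (0 : Fin 2) : Fin 4) = 0 from rfl,
      show (Fin.castAdd 2 (1 : Fin 2) : Fin 4) = 1 from rfl,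
      show (Fin.natAdd 2 (0 : Fin 2) : Fin 4) = 2 from rfl,
      show (Fin.natAdd 2 (1 : Fin 2) : Fin 4) = 3 from rfl]
    rw [G2Aux.hbmain κ hκ (x (σ 0)) (x (σ 1)), G2Aux.hbmain κ hκ (x (σ 2)) (x (σ 3))]
    ring
  rw [hsum, mul_zero]

end
end

section
/- On the 7-dimensional nilpotent Lie algebra 27B = (0,0,0,0,0,12+34,15+23), every closed 4-form β satisfies (ι_{e₆} ι_{e₇} β)² = 0. -/
open scoped BigOperators

noncomputable section

/-- The Lie bracket of `27B = (0,0,0,0,0,12+34,15+23)` on `ℝ⁷` (so `de⁶ = e¹² + e³⁴`,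
`de⁷ = e¹⁵ + e²³`, `deⁱ = 0` for `i ≤ 5`). -/
def brk27B : (Fin 7 → ℝ) → (Fin 7 → ℝ) → (Fin 7 → ℝ) := fun x y =>
  ![0, 0, 0, 0, 0, -((x 0 * y 1 - x 1 * y 0) + (x 2 * y 3 - x 3 * y 2)),
    -((x 0 * y 4 - x 4 * y 0) + (x 1 * y 2 - x 2 * y 1))]


section B27Aux

variable (κ : AlternatingMap ℝ (Fin 7 → ℝ) ℝ (Fin 4))

lemma b27_ceD4 (x : Fin 5 → Fin 7 → ℝ) : ceDVal brk27B κ x =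
    ∑ i : Fin 5, ∑ m : Fin 4,
      if (i : ℕ) ≤ (m : ℕ) then
        (-1 : ℝ) ^ ((i : ℕ) + ((i.succAbove m : Fin 5) : ℕ)) *
          κ (Fin.cons (brk27B (x i) (x (i.succAbove m)))
              fun l : Fin 3 => x (i.succAbove (m.succAbove l)))
      else 0 := rfl

lemma b27_brk_eq (x y : Fin 7 → ℝ) : brk27B x y =
    (-((x 0 * y 1 - x 1 * y 0) + (x 2 * y 3 - x 3 * y 2))) • (Pi.single 5 1 : Fin 7 → ℝ) +
    (-((x 0 * y 4 - x 4 * y 0) + (x 1 * y 2 - x 2 * y 1))) • (Pi.single 6 1 : Fin 7 → ℝ) := by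
  funext j
  fin_cases j <;>
    simp [brk27B, Pi.single_apply, Matrix.cons_val_succ', Matrix.cons_val_zero'] <;> rfl

lemma b27_bcur (u : Fin 7 → ℝ) (w : Fin 3 → Fin 7 → ℝ) :
    κ (Fin.cons u w) = (κ.curryLeft u) w := rfl

lemma b27_bsa (a b : ℝ) (u v : Fin 7 → ℝ) (w : Fin 3 → Fin 7 → ℝ) :
    κ (Fin.cons (a • u + b • v) w) = a * κ (Fin.cons u w) + b * κ (Fin.cons v w) := by
  rw [b27_bcur, b27_bcur, b27_bcur, map_add, map_smul, map_smul]
  simp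

lemma b27_sav (i : Fin 5) (m : Fin 4) (x : Fin 5 → Fin 7 → ℝ) :
    (fun l : Fin 3 => x (i.succAbove (m.succAbove l))) =
      ![x (i.succAbove (m.succAbove 0)), x (i.succAbove (m.succAbove 1)),
        x (i.succAbove (m.succAbove 2))] := by
  funext l; fin_cases l <;> rfl

lemma b27_sA00 : (0:Fin 5).succAbove (0:Fin 4) = 1 := rfl
lemma b27_sA01 : (0:Fin 5).succAbove (1:Fin 4) = 2 := rfl
lemma b27_sA02 : (0:Fin 5).succAbove (2:Fin 4) = 3 := rfl
lemma b27_sA03 : (0:Fin 5).succAbove (3:Fin 4) = 4 := rfl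
lemma b27_sA10 : (1:Fin 5).succAbove (0:Fin 4) = 0 := rfl
lemma b27_sA11 : (1:Fin 5).succAbove (1:Fin 4) = 2 := rfl
lemma b27_sA12 : (1:Fin 5).succAbove (2:Fin 4) = 3 := rfl
lemma b27_sA13 : (1:Fin 5).succAbove (3:Fin 4) = 4 := rfl
lemma b27_sA20 : (2:Fin 5).succAbove (0:Fin 4) = 0 := rfl
lemma b27_sA21 : (2:Fin 5).succAbove (1:Fin 4) = 1 := rfl
lemma b27_sA22 : (2:Fin 5).succAbove (2:Fin 4) = 3 := rfl
lemma b27_sA23 : (2:Fin 5).succAbove (3:Fin 4) = 4 := rfl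
lemma b27_sA30 : (3:Fin 5).succAbove (0:Fin 4) = 0 := rfl
lemma b27_sA31 : (3:Fin 5).succAbove (1:Fin 4) = 1 := rfl
lemma b27_sA32 : (3:Fin 5).succAbove (2:Fin 4) = 2 := rfl
lemma b27_sA33 : (3:Fin 5).succAbove (3:Fin 4) = 4 := rfl
lemma b27_sA40 : (4:Fin 5).succAbove (0:Fin 4) = 0 := rfl
lemma b27_sA41 : (4:Fin 5).succAbove (1:Fin 4) = 1 := rfl
lemma b27_sA42 : (4:Fin 5).succAbove (2:Fin 4) = 2 := rfl
lemma b27_sA43 : (4:Fin 5).succAbove (3:Fin 4) = 3 := rfl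
lemma b27_sB00 : (0:Fin 4).succAbove (0:Fin 3) = 1 := rfl
lemma b27_sB01 : (0:Fin 4).succAbove (1:Fin 3) = 2 := rfl
lemma b27_sB02 : (0:Fin 4).succAbove (2:Fin 3) = 3 := rfl
lemma b27_sB10 : (1:Fin 4).succAbove (0:Fin 3) = 0 := rfl
lemma b27_sB11 : (1:Fin 4).succAbove (1:Fin 3) = 2 := rfl
lemma b27_sB12 : (1:Fin 4).succAbove (2:Fin 3) = 3 := rfl
lemma b27_sB20 : (2:Fin 4).succAbove (0:Fin 3) = 0 := rfl
lemma b27_sB21 : (2:Fin 4).succAbove (1:Fin 3) = 1 := rfl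
lemma b27_sB22 : (2:Fin 4).succAbove (2:Fin 3) = 3 := rfl
lemma b27_sB30 : (3:Fin 4).succAbove (0:Fin 3) = 0 := rfl
lemma b27_sB31 : (3:Fin 4).succAbove (1:Fin 3) = 1 := rfl
lemma b27_sB32 : (3:Fin 4).succAbove (2:Fin 3) = 2 := rfl

lemma b27_negM (u : Fin 7 → ℝ) (w : Fin 3 → Fin 7 → ℝ) :
    κ (Matrix.vecCons (-u) w) = -κ (Matrix.vecCons u w) := by
  have h : ∀ z : Fin 7 → ℝ, κ (Matrix.vecCons z w) = (κ.curryLeft z) w := fun z => rfl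
  rw [h, h, map_neg]
  simp

lemma b27_zeroM (w : Fin 3 → Fin 7 → ℝ) : κ (Matrix.vecCons 0 w) = 0 := by
  have h : ∀ z : Fin 7 → ℝ, κ (Matrix.vecCons z w) = (κ.curryLeft z) w := fun z => rfl
  rw [h, map_zero]
  simp

lemma b27_consM (u : Fin 7 → ℝ) (w : Fin 3 → Fin 7 → ℝ) :
    Fin.cons u w = Matrix.vecCons u w := rfl

lemma b27_sw01 (a b c d : Fin 7 → ℝ) : κ ![a, b, c, d] = -κ ![b, a, c, d] := by
  have h : (![b, a, c, d] ∘ Equiv.swap (0 : Fin 4) 1) = ![a, b, c, d] := by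
    funext i; fin_cases i <;> simp [Equiv.swap_apply_def]
  rw [← h, κ.map_swap _ (show (0 : Fin 4) ≠ 1 by decide)]

lemma b27_sw12 (a b c d : Fin 7 → ℝ) : κ ![a, b, c, d] = -κ ![a, c, b, d] := by
  have h : (![a, c, b, d] ∘ Equiv.swap (1 : Fin 4) 2) = ![a, b, c, d] := by
    funext i; fin_cases i <;> simp [Equiv.swap_apply_def]
  rw [← h, κ.map_swap _ (show (1 : Fin 4) ≠ 2 by decide)]

lemma b27_sw23 (a b c d : Fin 7 → ℝ) : κ ![a, b, c, d] = -κ ![a, b, d, c] := by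
  have h : (![a, b, d, c] ∘ Equiv.swap (2 : Fin 4) 3) = ![a, b, c, d] := by
    funext i; fin_cases i <;> simp [Equiv.swap_apply_def]
  rw [← h, κ.map_swap _ (show (2 : Fin 4) ≠ 3 by decide)]

lemma b27_z02 (a b c : Fin 7 → ℝ) : κ ![a, b, a, c] = 0 :=
  κ.map_eq_zero_of_eq _ (show ![a,b,a,c] 0 = ![a,b,a,c] 2 from rfl) (by decide)

lemma b27_z03 (a b c : Fin 7 → ℝ) : κ ![a, b, c, a] = 0 :=
  κ.map_eq_zero_of_eq _ (show ![a,b,c,a] 0 = ![a,b,c,a] 3 from rfl) (by decide)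

lemma b27_z12 (a b c : Fin 7 → ℝ) : κ ![a, b, b, c] = 0 :=
  κ.map_eq_zero_of_eq _ (show ![a,b,b,c] 1 = ![a,b,b,c] 2 from rfl) (by decide)

lemma b27_z13 (a b c : Fin 7 → ℝ) : κ ![a, b, c, b] = 0 :=
  κ.map_eq_zero_of_eq _ (show ![a,b,c,b] 1 = ![a,b,c,b] 3 from rfl) (by decide)

lemma b27_z23 (a b c : Fin 7 → ℝ) : κ ![a, b, c, c] = 0 :=
  κ.map_eq_zero_of_eq _ (show ![a,b,c,c] 2 = ![a,b,c,c] 3 from rfl) (by decide)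

lemma b27_A (u v : Fin 7 → ℝ) :
    κ ![Pi.single 5 1, u, v, Pi.single 6 1] = -κ ![Pi.single 6 1, Pi.single 5 1, u, v] := by
  have h1 := b27_sw23 κ (Pi.single 5 1) u v (Pi.single 6 1)
  have h2 := b27_sw12 κ (Pi.single 5 1) u (Pi.single 6 1) v
  have h3 := b27_sw01 κ (Pi.single 5 1) (Pi.single 6 1) u v
  rw [h1, h2, h3]; ring

lemma b27_Bm (u v : Fin 7 → ℝ) :
    κ ![Pi.single 6 1, u, v, Pi.single 5 1] = κ ![Pi.single 6 1, Pi.single 5 1, u, v] := by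
  have h1 := b27_sw23 κ (Pi.single 6 1) u v (Pi.single 5 1)
  have h2 := b27_sw12 κ (Pi.single 6 1) u (Pi.single 5 1) v
  rw [h1, h2]; ring

lemma b27_exp_fst (γ : AlternatingMap ℝ (Fin 7 → ℝ) ℝ (Fin 2)) (a b : Fin 7 → ℝ) :
    γ ![a, b] = ∑ p : Fin 7, a p * γ ![Pi.single p 1, b] := by
  have upd : ∀ z : Fin 7 → ℝ, Function.update ![a, b] 0 z = ![z, b] := by
    intro z; funext i; fin_cases i <;> simp [Function.update]
  have ha : a = ∑ p : Fin 7, a p • (Pi.single p 1 : Fin 7 → ℝ) := by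
    funext j
    simp [Finset.sum_apply, Pi.single_apply]
  calc γ ![a, b] = γ (Function.update ![a, b] 0 (∑ p : Fin 7, a p • (Pi.single p 1 : Fin 7 → ℝ))) := by
        rw [upd, ← ha]
    _ = ∑ p : Fin 7, γ (Function.update ![a, b] 0 (a p • (Pi.single p 1 : Fin 7 → ℝ))) := by
        exact γ.toMultilinearMap.map_update_sum Finset.univ 0 _ _
    _ = ∑ p : Fin 7, a p * γ ![Pi.single p 1, b] := by
        refine Finset.sum_congr rfl fun p _ => ?_
        rw [show γ (Function.update ![a, b] 0 (a p • (Pi.single p 1 : Fin 7 → ℝ)))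
            = a p • γ (Function.update ![a, b] 0 (Pi.single p 1 : Fin 7 → ℝ)) from
          γ.toMultilinearMap.map_update_smul _ 0 _ _, upd, smul_eq_mul]

lemma b27_exp_snd (γ : AlternatingMap ℝ (Fin 7 → ℝ) ℝ (Fin 2)) (a b : Fin 7 → ℝ) :
    γ ![a, b] = ∑ q : Fin 7, b q * γ ![a, Pi.single q 1] := by
  have upd : ∀ z : Fin 7 → ℝ, Function.update ![a, b] 1 z = ![a, z] := by
    intro z; funext i; fin_cases i <;> simp [Function.update]
  have hb : b = ∑ q : Fin 7, b q • (Pi.single q 1 : Fin 7 → ℝ) := by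
    funext j
    simp [Finset.sum_apply, Pi.single_apply]
  calc γ ![a, b] = γ (Function.update ![a, b] 1 (∑ q : Fin 7, b q • (Pi.single q 1 : Fin 7 → ℝ))) := by
        rw [upd, ← hb]
    _ = ∑ q : Fin 7, γ (Function.update ![a, b] 1 (b q • (Pi.single q 1 : Fin 7 → ℝ))) := by
        exact γ.toMultilinearMap.map_update_sum Finset.univ 1 _ _
    _ = ∑ q : Fin 7, b q * γ ![a, Pi.single q 1] := by
        refine Finset.sum_congr rfl fun q _ => ?_
        rw [show γ (Function.update ![a, b] 1 (b q • (Pi.single q 1 : Fin 7 → ℝ)))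
            = b q • γ (Function.update ![a, b] 1 (Pi.single q 1 : Fin 7 → ℝ)) from
          γ.toMultilinearMap.map_update_smul _ 1 _ _, upd, smul_eq_mul]

lemma b27_exp2 (γ : AlternatingMap ℝ (Fin 7 → ℝ) ℝ (Fin 2)) (a b : Fin 7 → ℝ) :
    γ ![a, b] = ∑ p : Fin 7, ∑ q : Fin 7,
      a p * (b q * γ ![Pi.single p 1, Pi.single q 1]) := by
  rw [b27_exp_fst]
  refine Finset.sum_congr rfl fun p _ => ?_
  rw [b27_exp_snd, Finset.mul_sum]

lemma b27_det (x : Fin 4 → Fin 7 → ℝ) (c0 c1 c2 c3 : Fin 7) (i j : Fin 4) (hij : i ≠ j)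
    (hc : ![c0, c1, c2, c3] i = ![c0, c1, c2, c3] j) :
    ∑ σ : Equiv.Perm (Fin 4), ((Equiv.Perm.sign σ : ℤ) : ℝ) *
      (x (σ 0) c0 * x (σ 1) c1 * x (σ 2) c2 * x (σ 3) c3) = 0 := by
  have h0 : (Matrix.of fun a b : Fin 4 => x a (![c0, c1, c2, c3] b)).det = 0 :=
    Matrix.det_zero_of_column_eq hij (fun k => by rw [Matrix.of_apply, Matrix.of_apply, hc])
  rw [Matrix.det_apply] at h0
  rw [← h0]
  refine Finset.sum_congr rfl fun σ _ => ?_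
  rw [Fin.prod_univ_four]
  simp [Units.smul_def, zsmul_eq_mul]

end B27Aux

set_option maxHeartbeats 4000000 in
/-- On `27B = (0,0,0,0,0,12+34,15+23)`, every closed 4-form `β`
satisfies `(ι_{e₆} ι_{e₇} β)² = 0`. -/
theorem b27_closed_four_form_contraction_sq_zero
    (β : AlternatingMap ℝ (Fin 7 → ℝ) ℝ (Fin 4))
    (hβ : ∀ x : Fin 5 → (Fin 7 → ℝ), ceDVal brk27B β x = 0) :
    ∀ x : Fin 4 → (Fin 7 → ℝ),
      wedgeVal ((β.curryLeft (Pi.single 6 1)).curryLeft (Pi.single 5 1))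
        ((β.curryLeft (Pi.single 6 1)).curryLeft (Pi.single 5 1)) x = 0 := by
  have e1 := hβ ![Pi.single 0 1, Pi.single 1 1, Pi.single 2 1, Pi.single 3 1, Pi.single 6 1]
  rw [b27_ceD4] at e1
  simp (config := { decide := true }) [Fin.sum_univ_five, Fin.sum_univ_four, b27_brk_eq,
    b27_sav, b27_bsa, Pi.single_apply, Matrix.vecHead, Matrix.vecTail, b27_consM,
    b27_negM, b27_zeroM, b27_A, b27_Bm, b27_z02, b27_z03, b27_z12, b27_z13, b27_z23,
    b27_sA00, b27_sA01, b27_sA02, b27_sA03, b27_sA10, b27_sA11, b27_sA12, b27_sA13, b27_sA20, b27_sA21, b27_sA22, b27_sA23, b27_sA30, b27_sA31, b27_sA32, b27_sA33, b27_sA40, b27_sA41, b27_sA42, b27_sA43, b27_sB00, b27_sB01, b27_sB02, b27_sB10, b27_sB11, b27_sB12, b27_sB20, b27_sB21, b27_sB22, b27_sB30, b27_sB31, b27_sB32] at e1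
  have e2 := hβ ![Pi.single 0 1, Pi.single 1 1, Pi.single 2 1, Pi.single 4 1, Pi.single 6 1]
  rw [b27_ceD4] at e2
  simp (config := { decide := true }) [Fin.sum_univ_five, Fin.sum_univ_four, b27_brk_eq,
    b27_sav, b27_bsa, Pi.single_apply, Matrix.vecHead, Matrix.vecTail, b27_consM,
    b27_negM, b27_zeroM, b27_A, b27_Bm, b27_z02, b27_z03, b27_z12, b27_z13, b27_z23,
    b27_sA00, b27_sA01, b27_sA02, b27_sA03, b27_sA10, b27_sA11, b27_sA12, b27_sA13, b27_sA20, b27_sA21, b27_sA22, b27_sA23, b27_sA30, b27_sA31, b27_sA32, b27_sA33, b27_sA40, b27_sA41, b27_sA42, b27_sA43, b27_sB00, b27_sB01, b27_sB02, b27_sB10, b27_sB11, b27_sB12, b27_sB20, b27_sB21, b27_sB22, b27_sB30, b27_sB31, b27_sB32] at e2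
  have e3 := hβ ![Pi.single 0 1, Pi.single 1 1, Pi.single 3 1, Pi.single 4 1, Pi.single 6 1]
  rw [b27_ceD4] at e3
  simp (config := { decide := true }) [Fin.sum_univ_five, Fin.sum_univ_four, b27_brk_eq,
    b27_sav, b27_bsa, Pi.single_apply, Matrix.vecHead, Matrix.vecTail, b27_consM,
    b27_negM, b27_zeroM, b27_A, b27_Bm, b27_z02, b27_z03, b27_z12, b27_z13, b27_z23,
    b27_sA00, b27_sA01, b27_sA02, b27_sA03, b27_sA10, b27_sA11, b27_sA12, b27_sA13, b27_sA20, b27_sA21, b27_sA22, b27_sA23, b27_sA30, b27_sA31, b27_sA32, b27_sA33, b27_sA40, b27_sA41, b27_sA42, b27_sA43, b27_sB00, b27_sB01, b27_sB02, b27_sB10, b27_sB11, b27_sB12, b27_sB20, b27_sB21, b27_sB22, b27_sB30, b27_sB31, b27_sB32] at e3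
  have e4 := hβ ![Pi.single 0 1, Pi.single 2 1, Pi.single 3 1, Pi.single 4 1, Pi.single 6 1]
  rw [b27_ceD4] at e4
  simp (config := { decide := true }) [Fin.sum_univ_five, Fin.sum_univ_four, b27_brk_eq,
    b27_sav, b27_bsa, Pi.single_apply, Matrix.vecHead, Matrix.vecTail, b27_consM,
    b27_negM, b27_zeroM, b27_A, b27_Bm, b27_z02, b27_z03, b27_z12, b27_z13, b27_z23,
    b27_sA00, b27_sA01, b27_sA02, b27_sA03, b27_sA10, b27_sA11, b27_sA12, b27_sA13, b27_sA20, b27_sA21, b27_sA22, b27_sA23, b27_sA30, b27_sA31, b27_sA32, b27_sA33, b27_sA40, b27_sA41, b27_sA42, b27_sA43, b27_sB00, b27_sB01, b27_sB02, b27_sB10, b27_sB11, b27_sB12, b27_sB20, b27_sB21, b27_sB22, b27_sB30, b27_sB31, b27_sB32] at e4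
  have e5 := hβ ![Pi.single 1 1, Pi.single 2 1, Pi.single 3 1, Pi.single 4 1, Pi.single 6 1]
  rw [b27_ceD4] at e5
  simp (config := { decide := true }) [Fin.sum_univ_five, Fin.sum_univ_four, b27_brk_eq,
    b27_sav, b27_bsa, Pi.single_apply, Matrix.vecHead, Matrix.vecTail, b27_consM,
    b27_negM, b27_zeroM, b27_A, b27_Bm, b27_z02, b27_z03, b27_z12, b27_z13, b27_z23,
    b27_sA00, b27_sA01, b27_sA02, b27_sA03, b27_sA10, b27_sA11, b27_sA12, b27_sA13, b27_sA20, b27_sA21, b27_sA22, b27_sA23, b27_sA30, b27_sA31, b27_sA32, b27_sA33, b27_sA40, b27_sA41, b27_sA42, b27_sA43, b27_sB00, b27_sB01, b27_sB02, b27_sB10, b27_sB11, b27_sB12, b27_sB20, b27_sB21, b27_sB22, b27_sB30, b27_sB31, b27_sB32] at e5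
  have e6 := hβ ![Pi.single 0 1, Pi.single 1 1, Pi.single 2 1, Pi.single 3 1, Pi.single 5 1]
  rw [b27_ceD4] at e6
  simp (config := { decide := true }) [Fin.sum_univ_five, Fin.sum_univ_four, b27_brk_eq,
    b27_sav, b27_bsa, Pi.single_apply, Matrix.vecHead, Matrix.vecTail, b27_consM,
    b27_negM, b27_zeroM, b27_A, b27_Bm, b27_z02, b27_z03, b27_z12, b27_z13, b27_z23,
    b27_sA00, b27_sA01, b27_sA02, b27_sA03, b27_sA10, b27_sA11, b27_sA12, b27_sA13, b27_sA20, b27_sA21, b27_sA22, b27_sA23, b27_sA30, b27_sA31, b27_sA32, b27_sA33, b27_sA40, b27_sA41, b27_sA42, b27_sA43, b27_sB00, b27_sB01, b27_sB02, b27_sB10, b27_sB11, b27_sB12, b27_sB20, b27_sB21, b27_sB22, b27_sB30, b27_sB31, b27_sB32] at e6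
  have e7 := hβ ![Pi.single 0 1, Pi.single 1 1, Pi.single 2 1, Pi.single 4 1, Pi.single 5 1]
  rw [b27_ceD4] at e7
  simp (config := { decide := true }) [Fin.sum_univ_five, Fin.sum_univ_four, b27_brk_eq,
    b27_sav, b27_bsa, Pi.single_apply, Matrix.vecHead, Matrix.vecTail, b27_consM,
    b27_negM, b27_zeroM, b27_A, b27_Bm, b27_z02, b27_z03, b27_z12, b27_z13, b27_z23,
    b27_sA00, b27_sA01, b27_sA02, b27_sA03, b27_sA10, b27_sA11, b27_sA12, b27_sA13, b27_sA20, b27_sA21, b27_sA22, b27_sA23, b27_sA30, b27_sA31, b27_sA32, b27_sA33, b27_sA40, b27_sA41, b27_sA42, b27_sA43, b27_sB00, b27_sB01, b27_sB02, b27_sB10, b27_sB11, b27_sB12, b27_sB20, b27_sB21, b27_sB22, b27_sB30, b27_sB31, b27_sB32] at e7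
  have e8 := hβ ![Pi.single 0 1, Pi.single 1 1, Pi.single 3 1, Pi.single 4 1, Pi.single 5 1]
  rw [b27_ceD4] at e8
  simp (config := { decide := true }) [Fin.sum_univ_five, Fin.sum_univ_four, b27_brk_eq,
    b27_sav, b27_bsa, Pi.single_apply, Matrix.vecHead, Matrix.vecTail, b27_consM,
    b27_negM, b27_zeroM, b27_A, b27_Bm, b27_z02, b27_z03, b27_z12, b27_z13, b27_z23,
    b27_sA00, b27_sA01, b27_sA02, b27_sA03, b27_sA10, b27_sA11, b27_sA12, b27_sA13, b27_sA20, b27_sA21, b27_sA22, b27_sA23, b27_sA30, b27_sA31, b27_sA32, b27_sA33, b27_sA40, b27_sA41, b27_sA42, b27_sA43, b27_sB00, b27_sB01, b27_sB02, b27_sB10, b27_sB11, b27_sB12, b27_sB20, b27_sB21, b27_sB22, b27_sB30, b27_sB31, b27_sB32] at e8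
  have e9 := hβ ![Pi.single 0 1, Pi.single 2 1, Pi.single 3 1, Pi.single 4 1, Pi.single 5 1]
  rw [b27_ceD4] at e9
  simp (config := { decide := true }) [Fin.sum_univ_five, Fin.sum_univ_four, b27_brk_eq,
    b27_sav, b27_bsa, Pi.single_apply, Matrix.vecHead, Matrix.vecTail, b27_consM,
    b27_negM, b27_zeroM, b27_A, b27_Bm, b27_z02, b27_z03, b27_z12, b27_z13, b27_z23,
    b27_sA00, b27_sA01, b27_sA02, b27_sA03, b27_sA10, b27_sA11, b27_sA12, b27_sA13, b27_sA20, b27_sA21, b27_sA22, b27_sA23, b27_sA30, b27_sA31, b27_sA32, b27_sA33, b27_sA40, b27_sA41, b27_sA42, b27_sA43, b27_sB00, b27_sB01, b27_sB02, b27_sB10, b27_sB11, b27_sB12, b27_sB20, b27_sB21, b27_sB22, b27_sB30, b27_sB31, b27_sB32] at e9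
  have k24 : β ![Pi.single 6 1, Pi.single 5 1, Pi.single 2 1, Pi.single 4 1] = 0 := e2
  have k34 : β ![Pi.single 6 1, Pi.single 5 1, Pi.single 3 1, Pi.single 4 1] = 0 := e3
  have k04 : β ![Pi.single 6 1, Pi.single 5 1, Pi.single 0 1, Pi.single 4 1] = 0 := e4
  have k14 : β ![Pi.single 6 1, Pi.single 5 1, Pi.single 1 1, Pi.single 4 1] = 0 := e5
  have k03 : β ![Pi.single 6 1, Pi.single 5 1, Pi.single 0 1, Pi.single 3 1] = 0 := e6
  have k13 : β ![Pi.single 6 1, Pi.single 5 1, Pi.single 1 1, Pi.single 3 1] = 0 := e8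
  have k23 : β ![Pi.single 6 1, Pi.single 5 1, Pi.single 2 1, Pi.single 3 1] = 0 := e9
  have k01 : β ![Pi.single 6 1, Pi.single 5 1, Pi.single 0 1, Pi.single 1 1] = 0 := by have := e1; rw [k23] at this; linarith
  have k12 : β ![Pi.single 6 1, Pi.single 5 1, Pi.single 1 1, Pi.single 2 1] = 0 := by have := e7; rw [k04] at this; linarith
  have k10 : β ![Pi.single 6 1, Pi.single 5 1, Pi.single 1 1, Pi.single 0 1] = 0 := by
    rw [b27_sw23 β (Pi.single 6 1) (Pi.single 5 1) (Pi.single 1 1) (Pi.single 0 1), k01, neg_zero]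
  have k30 : β ![Pi.single 6 1, Pi.single 5 1, Pi.single 3 1, Pi.single 0 1] = 0 := by
    rw [b27_sw23 β (Pi.single 6 1) (Pi.single 5 1) (Pi.single 3 1) (Pi.single 0 1), k03, neg_zero]
  have k40 : β ![Pi.single 6 1, Pi.single 5 1, Pi.single 4 1, Pi.single 0 1] = 0 := by
    rw [b27_sw23 β (Pi.single 6 1) (Pi.single 5 1) (Pi.single 4 1) (Pi.single 0 1), k04, neg_zero]
  have k21 : β ![Pi.single 6 1, Pi.single 5 1, Pi.single 2 1, Pi.single 1 1] = 0 := by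
    rw [b27_sw23 β (Pi.single 6 1) (Pi.single 5 1) (Pi.single 2 1) (Pi.single 1 1), k12, neg_zero]
  have k31 : β ![Pi.single 6 1, Pi.single 5 1, Pi.single 3 1, Pi.single 1 1] = 0 := by
    rw [b27_sw23 β (Pi.single 6 1) (Pi.single 5 1) (Pi.single 3 1) (Pi.single 1 1), k13, neg_zero]
  have k41 : β ![Pi.single 6 1, Pi.single 5 1, Pi.single 4 1, Pi.single 1 1] = 0 := by
    rw [b27_sw23 β (Pi.single 6 1) (Pi.single 5 1) (Pi.single 4 1) (Pi.single 1 1), k14, neg_zero]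
  have k32 : β ![Pi.single 6 1, Pi.single 5 1, Pi.single 3 1, Pi.single 2 1] = 0 := by
    rw [b27_sw23 β (Pi.single 6 1) (Pi.single 5 1) (Pi.single 3 1) (Pi.single 2 1), k23, neg_zero]
  have k42 : β ![Pi.single 6 1, Pi.single 5 1, Pi.single 4 1, Pi.single 2 1] = 0 := by
    rw [b27_sw23 β (Pi.single 6 1) (Pi.single 5 1) (Pi.single 4 1) (Pi.single 2 1), k24, neg_zero]
  have k43 : β ![Pi.single 6 1, Pi.single 5 1, Pi.single 4 1, Pi.single 3 1] = 0 := by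
    rw [b27_sw23 β (Pi.single 6 1) (Pi.single 5 1) (Pi.single 4 1) (Pi.single 3 1), k34, neg_zero]
  have gcur : ∀ u w : Fin 7 → ℝ,
      ((β.curryLeft (Pi.single 6 1)).curryLeft (Pi.single 5 1)) ![u, w] =
        β ![Pi.single 6 1, Pi.single 5 1, u, w] := fun u w => rfl
  have h2 : ∀ v : Fin 2 → (Fin 7 → ℝ),
      ((β.curryLeft (Pi.single 6 1)).curryLeft (Pi.single 5 1)) v =
        β ![Pi.single 6 1, Pi.single 5 1, Pi.single 0 1, Pi.single 2 1] *
          (v 0 0 * v 1 2 - v 0 2 * v 1 0) := by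
    intro v
    have hv : v = ![v 0, v 1] := by funext i; fin_cases i <;> rfl
    rw [hv]
    rw [b27_exp2]
    have K20 := b27_sw23 β (Pi.single 6 1) (Pi.single 5 1) (Pi.single 2 1) (Pi.single 0 1)
    simp [Fin.sum_univ_seven, gcur, b27_z02, b27_z03, b27_z12, b27_z13, b27_z23,
      k01, k03, k04, k12, k13, k14, k23, k24, k34,
      k10, k30, k40, k21, k31, k41, k32, k42, k43, K20]
    ring
  intro x
  have cA0 : (Fin.castAdd 2 (0 : Fin 2)) = (0 : Fin 4) := rfl
  have cA1 : (Fin.castAdd 2 (1 : Fin 2)) = (1 : Fin 4) := rfl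
  have nA0 : (Fin.natAdd 2 (0 : Fin 2)) = (2 : Fin 4) := rfl
  have nA1 : (Fin.natAdd 2 (1 : Fin 2)) = (3 : Fin 4) := rfl
  simp only [wedgeVal, h2, cA0, cA1, nA0, nA1]
  apply mul_eq_zero_of_right
  set K := β ![Pi.single 6 1, Pi.single 5 1, Pi.single 0 1, Pi.single 2 1] with hK
  have S1 := b27_det x 0 2 0 2 0 2 (by decide) rfl
  have S2 := b27_det x 0 2 2 0 0 3 (by decide) rfl
  have S3 := b27_det x 2 0 0 2 0 3 (by decide) rfl
  have S4 := b27_det x 2 0 2 0 0 2 (by decide) rfl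
  have expand : ∀ σ : Equiv.Perm (Fin 4),
      ((Equiv.Perm.sign σ : ℤ) : ℝ) *
        (K * (x (σ 0) 0 * x (σ 1) 2 - x (σ 0) 2 * x (σ 1) 0)) *
        (K * (x (σ 2) 0 * x (σ 3) 2 - x (σ 2) 2 * x (σ 3) 0)) =
      K * K * (((Equiv.Perm.sign σ : ℤ) : ℝ) *
          (x (σ 0) 0 * x (σ 1) 2 * x (σ 2) 0 * x (σ 3) 2)) -
        K * K * (((Equiv.Perm.sign σ : ℤ) : ℝ) *
          (x (σ 0) 0 * x (σ 1) 2 * x (σ 2) 2 * x (σ 3) 0)) -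
        (K * K * (((Equiv.Perm.sign σ : ℤ) : ℝ) *
          (x (σ 0) 2 * x (σ 1) 0 * x (σ 2) 0 * x (σ 3) 2)) -
          K * K * (((Equiv.Perm.sign σ : ℤ) : ℝ) *
            (x (σ 0) 2 * x (σ 1) 0 * x (σ 2) 2 * x (σ 3) 0))) := fun σ => by ring
  rw [Finset.sum_congr rfl (fun σ _ => expand σ), Finset.sum_sub_distrib,
    Finset.sum_sub_distrib, Finset.sum_sub_distrib,
    ← Finset.mul_sum, ← Finset.mul_sum, ← Finset.mul_sum, ← Finset.mul_sum,
    S1, S2, S3, S4]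
  ring


end
end

section
/- On the 7-dimensional Heisenberg Lie algebra 17 = (0,0,0,0,0,0,12+34+56), the 4-form φ = e¹²³⁴ + e¹²⁵⁶ + e¹³⁶⁷ + e¹⁴⁵⁷ + e²³⁵⁷ − e²⁴⁶⁷ + e³⁴⁵⁶ is closed with respect to the Chevalley–Eilenberg differential; hence this Lie algebra admits a coclosed G₂-structure. -/
open scoped BigOperators

noncomputable section

/-- The Lie bracket of the 7-dimensional Heisenberg Lie algebra
`17 = (0,0,0,0,0,0,12+34+56)` on `ℝ⁷` (so `de⁷ = e¹² + e³⁴ + e⁵⁶`, `deⁱ = 0` for `i ≤ 6`). -/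
def brk17 : (Fin 7 → ℝ) → (Fin 7 → ℝ) → (Fin 7 → ℝ) := fun x y =>
  ![0, 0, 0, 0, 0, 0,
    -((x 0 * y 1 - x 1 * y 0) + (x 2 * y 3 - x 3 * y 2) + (x 4 * y 5 - x 5 * y 4))]

lemma eForm_apply {n k : ℕ} (S : Fin k → Fin n) (v : Fin k → Fin n → ℝ) :
    eForm S v = Matrix.det (Matrix.of fun i j => v i (S j)) := rfl
lemma det_fin_four' (M : Matrix (Fin 4) (Fin 4) ℝ) : M.det =
    M 0 0*M 1 1*M 2 2*M 3 3 - M 0 0*M 1 1*M 2 3*M 3 2 - M 0 0*M 1 2*M 2 1*M 3 3 + M 0 0*M 1 2*M 2 3*M 3 1 + M 0 0*M 1 3*M 2 1*M 3 2 - M 0 0*M 1 3*M 2 2*M 3 1 - M 0 1*M 1 0*M 2 2*M 3 3 + M 0 1*M 1 0*M 2 3*M 3 2 + M 0 1*M 1 2*M 2 0*M 3 3 - M 0 1*M 1 2*M 2 3*M 3 0 - M 0 1*M 1 3*M 2 0*M 3 2 + M 0 1*M 1 3*M 2 2*M 3 0 + M 0 2*M 1 0*M 2 1*M 3 3 - M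 0 2*M 1 0*M 2 3*M 3 1 - M 0 2*M 1 1*M 2 0*M 3 3 + M 0 2*M 1 1*M 2 3*M 3 0 + M 0 2*M 1 3*M 2 0*M 3 1 - M 0 2*M 1 3*M 2 1*M 3 0 - M 0 3*M 1 0*M 2 1*M 3 2 + M 0 3*M 1 0*M 2 2*M 3 1 + M 0 3*M 1 1*M 2 0*M 3 2 - M 0 3*M 1 1*M 2 2*M 3 0 - M 0 3*M 1 2*M 2 0*M 3 1 + M 0 3*M 1 2*M 2 1*M 3 0 := by
  have h1 : (Fin.succ 2 : Fin 4) = 3 := rfl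
  have h2 : (Fin.castSucc 2 : Fin 4) = 2 := rfl
  have h3 : (Fin.succAbove 2 2 : Fin 4) = 3 := rfl
  have h4 : (Fin.succAbove 3 2 : Fin 4) = 2 := rfl
  have h5 : (Fin.succAbove 1 2 : Fin 4) = 3 := rfl
  simp [Matrix.det_succ_row_zero, Fin.sum_univ_succ, Fin.succ_succAbove_zero, Fin.succ_succAbove_succ, Fin.succ_succAbove_one, h1, h2, h3, h4, h5]
  ring
set_option maxHeartbeats 1000000 in
lemma psiStd_apply (v : Fin 4 → Fin 7 → ℝ) : psiStd v =
      v 0 0 * v 1 1 * v 2 2 * v 3 3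
      - v 0 0 * v 1 1 * v 2 3 * v 3 2
      - v 0 0 * v 1 2 * v 2 1 * v 3 3
      + v 0 0 * v 1 2 * v 2 3 * v 3 1
      + v 0 0 * v 1 3 * v 2 1 * v 3 2
      - v 0 0 * v 1 3 * v 2 2 * v 3 1
      - v 0 1 * v 1 0 * v 2 2 * v 3 3
      + v 0 1 * v 1 0 * v 2 3 * v 3 2
      + v 0 1 * v 1 2 * v 2 0 * v 3 3
      - v 0 1 * v 1 2 * v 2 3 * v 3 0
      - v 0 1 * v 1 3 * v 2 0 * v 3 2
      + v 0 1 * v 1 3 * v 2 2 * v 3 0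
      + v 0 2 * v 1 0 * v 2 1 * v 3 3
      - v 0 2 * v 1 0 * v 2 3 * v 3 1
      - v 0 2 * v 1 1 * v 2 0 * v 3 3
      + v 0 2 * v 1 1 * v 2 3 * v 3 0
      + v 0 2 * v 1 3 * v 2 0 * v 3 1
      - v 0 2 * v 1 3 * v 2 1 * v 3 0
      - v 0 3 * v 1 0 * v 2 1 * v 3 2
      + v 0 3 * v 1 0 * v 2 2 * v 3 1
      + v 0 3 * v 1 1 * v 2 0 * v 3 2
      - v 0 3 * v 1 1 * v 2 2 * v 3 0
      - v 0 3 * v 1 2 * v 2 0 * v 3 1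
      + v 0 3 * v 1 2 * v 2 1 * v 3 0
      + v 0 0 * v 1 1 * v 2 4 * v 3 5
      - v 0 0 * v 1 1 * v 2 5 * v 3 4
      - v 0 0 * v 1 4 * v 2 1 * v 3 5
      + v 0 0 * v 1 4 * v 2 5 * v 3 1
      + v 0 0 * v 1 5 * v 2 1 * v 3 4
      - v 0 0 * v 1 5 * v 2 4 * v 3 1
      - v 0 1 * v 1 0 * v 2 4 * v 3 5
      + v 0 1 * v 1 0 * v 2 5 * v 3 4
      + v 0 1 * v 1 4 * v 2 0 * v 3 5
      - v 0 1 * v 1 4 * v 2 5 * v 3 0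
      - v 0 1 * v 1 5 * v 2 0 * v 3 4
      + v 0 1 * v 1 5 * v 2 4 * v 3 0
      + v 0 4 * v 1 0 * v 2 1 * v 3 5
      - v 0 4 * v 1 0 * v 2 5 * v 3 1
      - v 0 4 * v 1 1 * v 2 0 * v 3 5
      + v 0 4 * v 1 1 * v 2 5 * v 3 0
      + v 0 4 * v 1 5 * v 2 0 * v 3 1
      - v 0 4 * v 1 5 * v 2 1 * v 3 0
      - v 0 5 * v 1 0 * v 2 1 * v 3 4
      + v 0 5 * v 1 0 * v 2 4 * v 3 1
      + v 0 5 * v 1 1 * v 2 0 * v 3 4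
      - v 0 5 * v 1 1 * v 2 4 * v 3 0
      - v 0 5 * v 1 4 * v 2 0 * v 3 1
      + v 0 5 * v 1 4 * v 2 1 * v 3 0
      + v 0 0 * v 1 2 * v 2 5 * v 3 6
      - v 0 0 * v 1 2 * v 2 6 * v 3 5
      - v 0 0 * v 1 5 * v 2 2 * v 3 6
      + v 0 0 * v 1 5 * v 2 6 * v 3 2
      + v 0 0 * v 1 6 * v 2 2 * v 3 5
      - v 0 0 * v 1 6 * v 2 5 * v 3 2
      - v 0 2 * v 1 0 * v 2 5 * v 3 6
      + v 0 2 * v 1 0 * v 2 6 * v 3 5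
      + v 0 2 * v 1 5 * v 2 0 * v 3 6
      - v 0 2 * v 1 5 * v 2 6 * v 3 0
      - v 0 2 * v 1 6 * v 2 0 * v 3 5
      + v 0 2 * v 1 6 * v 2 5 * v 3 0
      + v 0 5 * v 1 0 * v 2 2 * v 3 6
      - v 0 5 * v 1 0 * v 2 6 * v 3 2
      - v 0 5 * v 1 2 * v 2 0 * v 3 6
      + v 0 5 * v 1 2 * v 2 6 * v 3 0
      + v 0 5 * v 1 6 * v 2 0 * v 3 2
      - v 0 5 * v 1 6 * v 2 2 * v 3 0
      - v 0 6 * v 1 0 * v 2 2 * v 3 5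
      + v 0 6 * v 1 0 * v 2 5 * v 3 2
      + v 0 6 * v 1 2 * v 2 0 * v 3 5
      - v 0 6 * v 1 2 * v 2 5 * v 3 0
      - v 0 6 * v 1 5 * v 2 0 * v 3 2
      + v 0 6 * v 1 5 * v 2 2 * v 3 0
      + v 0 0 * v 1 3 * v 2 4 * v 3 6
      - v 0 0 * v 1 3 * v 2 6 * v 3 4
      - v 0 0 * v 1 4 * v 2 3 * v 3 6
      + v 0 0 * v 1 4 * v 2 6 * v 3 3
      + v 0 0 * v 1 6 * v 2 3 * v 3 4
      - v 0 0 * v 1 6 * v 2 4 * v 3 3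
      - v 0 3 * v 1 0 * v 2 4 * v 3 6
      + v 0 3 * v 1 0 * v 2 6 * v 3 4
      + v 0 3 * v 1 4 * v 2 0 * v 3 6
      - v 0 3 * v 1 4 * v 2 6 * v 3 0
      - v 0 3 * v 1 6 * v 2 0 * v 3 4
      + v 0 3 * v 1 6 * v 2 4 * v 3 0
      + v 0 4 * v 1 0 * v 2 3 * v 3 6
      - v 0 4 * v 1 0 * v 2 6 * v 3 3
      - v 0 4 * v 1 3 * v 2 0 * v 3 6
      + v 0 4 * v 1 3 * v 2 6 * v 3 0
      + v 0 4 * v 1 6 * v 2 0 * v 3 3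
      - v 0 4 * v 1 6 * v 2 3 * v 3 0
      - v 0 6 * v 1 0 * v 2 3 * v 3 4
      + v 0 6 * v 1 0 * v 2 4 * v 3 3
      + v 0 6 * v 1 3 * v 2 0 * v 3 4
      - v 0 6 * v 1 3 * v 2 4 * v 3 0
      - v 0 6 * v 1 4 * v 2 0 * v 3 3
      + v 0 6 * v 1 4 * v 2 3 * v 3 0
      + v 0 1 * v 1 2 * v 2 4 * v 3 6
      - v 0 1 * v 1 2 * v 2 6 * v 3 4
      - v 0 1 * v 1 4 * v 2 2 * v 3 6
      + v 0 1 * v 1 4 * v 2 6 * v 3 2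
      + v 0 1 * v 1 6 * v 2 2 * v 3 4
      - v 0 1 * v 1 6 * v 2 4 * v 3 2
      - v 0 2 * v 1 1 * v 2 4 * v 3 6
      + v 0 2 * v 1 1 * v 2 6 * v 3 4
      + v 0 2 * v 1 4 * v 2 1 * v 3 6
      - v 0 2 * v 1 4 * v 2 6 * v 3 1
      - v 0 2 * v 1 6 * v 2 1 * v 3 4
      + v 0 2 * v 1 6 * v 2 4 * v 3 1
      + v 0 4 * v 1 1 * v 2 2 * v 3 6
      - v 0 4 * v 1 1 * v 2 6 * v 3 2
      - v 0 4 * v 1 2 * v 2 1 * v 3 6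
      + v 0 4 * v 1 2 * v 2 6 * v 3 1
      + v 0 4 * v 1 6 * v 2 1 * v 3 2
      - v 0 4 * v 1 6 * v 2 2 * v 3 1
      - v 0 6 * v 1 1 * v 2 2 * v 3 4
      + v 0 6 * v 1 1 * v 2 4 * v 3 2
      + v 0 6 * v 1 2 * v 2 1 * v 3 4
      - v 0 6 * v 1 2 * v 2 4 * v 3 1
      - v 0 6 * v 1 4 * v 2 1 * v 3 2
      + v 0 6 * v 1 4 * v 2 2 * v 3 1
      - v 0 1 * v 1 3 * v 2 5 * v 3 6
      + v 0 1 * v 1 3 * v 2 6 * v 3 5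
      + v 0 1 * v 1 5 * v 2 3 * v 3 6
      - v 0 1 * v 1 5 * v 2 6 * v 3 3
      - v 0 1 * v 1 6 * v 2 3 * v 3 5
      + v 0 1 * v 1 6 * v 2 5 * v 3 3
      + v 0 3 * v 1 1 * v 2 5 * v 3 6
      - v 0 3 * v 1 1 * v 2 6 * v 3 5
      - v 0 3 * v 1 5 * v 2 1 * v 3 6
      + v 0 3 * v 1 5 * v 2 6 * v 3 1
      + v 0 3 * v 1 6 * v 2 1 * v 3 5
      - v 0 3 * v 1 6 * v 2 5 * v 3 1
      - v 0 5 * v 1 1 * v 2 3 * v 3 6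
      + v 0 5 * v 1 1 * v 2 6 * v 3 3
      + v 0 5 * v 1 3 * v 2 1 * v 3 6
      - v 0 5 * v 1 3 * v 2 6 * v 3 1
      - v 0 5 * v 1 6 * v 2 1 * v 3 3
      + v 0 5 * v 1 6 * v 2 3 * v 3 1
      + v 0 6 * v 1 1 * v 2 3 * v 3 5
      - v 0 6 * v 1 1 * v 2 5 * v 3 3
      - v 0 6 * v 1 3 * v 2 1 * v 3 5
      + v 0 6 * v 1 3 * v 2 5 * v 3 1
      + v 0 6 * v 1 5 * v 2 1 * v 3 3
      - v 0 6 * v 1 5 * v 2 3 * v 3 1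
      + v 0 2 * v 1 3 * v 2 4 * v 3 5
      - v 0 2 * v 1 3 * v 2 5 * v 3 4
      - v 0 2 * v 1 4 * v 2 3 * v 3 5
      + v 0 2 * v 1 4 * v 2 5 * v 3 3
      + v 0 2 * v 1 5 * v 2 3 * v 3 4
      - v 0 2 * v 1 5 * v 2 4 * v 3 3
      - v 0 3 * v 1 2 * v 2 4 * v 3 5
      + v 0 3 * v 1 2 * v 2 5 * v 3 4
      + v 0 3 * v 1 4 * v 2 2 * v 3 5
      - v 0 3 * v 1 4 * v 2 5 * v 3 2
      - v 0 3 * v 1 5 * v 2 2 * v 3 4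
      + v 0 3 * v 1 5 * v 2 4 * v 3 2
      + v 0 4 * v 1 2 * v 2 3 * v 3 5
      - v 0 4 * v 1 2 * v 2 5 * v 3 3
      - v 0 4 * v 1 3 * v 2 2 * v 3 5
      + v 0 4 * v 1 3 * v 2 5 * v 3 2
      + v 0 4 * v 1 5 * v 2 2 * v 3 3
      - v 0 4 * v 1 5 * v 2 3 * v 3 2
      - v 0 5 * v 1 2 * v 2 3 * v 3 4
      + v 0 5 * v 1 2 * v 2 4 * v 3 3
      + v 0 5 * v 1 3 * v 2 2 * v 3 4
      - v 0 5 * v 1 3 * v 2 4 * v 3 2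
      - v 0 5 * v 1 4 * v 2 2 * v 3 3
      + v 0 5 * v 1 4 * v 2 3 * v 3 2
    := by
  simp only [psiStd, AlternatingMap.add_apply, AlternatingMap.sub_apply, eForm_apply,
    det_fin_four', Matrix.of_apply, Matrix.cons_val_zero, Matrix.cons_val_one, Matrix.head_cons,
    Matrix.cons_val_two, Matrix.tail_cons, Matrix.cons_val_three]
  ring
lemma consA (a : Fin 7 → ℝ) (g : Fin 3 → Fin 7 → ℝ) : (Fin.cons a g : Fin 4 → Fin 7 → ℝ) 0 = a := rfl
lemma consB (a : Fin 7 → ℝ) (g : Fin 3 → Fin 7 → ℝ) : (Fin.cons a g : Fin 4 → Fin 7 → ℝ) 1 = g 0 := rfl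
lemma consC (a : Fin 7 → ℝ) (g : Fin 3 → Fin 7 → ℝ) : (Fin.cons a g : Fin 4 → Fin 7 → ℝ) 2 = g 1 := rfl
lemma consD (a : Fin 7 → ℝ) (g : Fin 3 → Fin 7 → ℝ) : (Fin.cons a g : Fin 4 → Fin 7 → ℝ) 3 = g 2 := rfl

lemma brkA (a b : Fin 7 → ℝ) : brk17 a b 0 = 0 := rfl
lemma brkB (a b : Fin 7 → ℝ) : brk17 a b 1 = 0 := rfl
lemma brkC (a b : Fin 7 → ℝ) : brk17 a b 2 = 0 := rfl
lemma brkD (a b : Fin 7 → ℝ) : brk17 a b 3 = 0 := rfl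
lemma brkE (a b : Fin 7 → ℝ) : brk17 a b 4 = 0 := rfl
lemma brkF (a b : Fin 7 → ℝ) : brk17 a b 5 = 0 := rfl
lemma brkG (a b : Fin 7 → ℝ) : brk17 a b 6 =
    -((a 0 * b 1 - a 1 * b 0) + (a 2 * b 3 - a 3 * b 2) + (a 4 * b 5 - a 5 * b 4)) := rfl

set_option maxRecDepth 100000 in
set_option maxHeartbeats 0 in
lemma key (x : Fin 5 → Fin 7 → ℝ) : ceDVal brk17 psiStd x = 0 := by
  simp only [ceDVal, Fin.sum_univ_succ, Fin.sum_univ_zero, Fin.isValue]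
  norm_num [Fin.succAbove, Fin.lt_def]
  simp only [Nat.reduceAdd, psiStd_apply, consA, consB, consC, consD, brkA, brkB, brkC, brkD,
    brkE, brkF, brkG, mul_zero, zero_mul, neg_zero, add_zero, zero_add, sub_zero, zero_sub,
    neg_neg, neg_add_rev]
  simp (config := {decide := true})
  have a2 : (⟨2, by norm_num⟩ : Fin 5) = 2 := rfl
  have a3 : (⟨3, by norm_num⟩ : Fin 5) = 3 := rfl
  have a4 : (⟨4, by norm_num⟩ : Fin 5) = 4 := rfl
  ring

/-- On the Heisenberg Lie algebra `17 = (0,0,0,0,0,0,12+34+56)`, the 4-form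
`φ = e¹²³⁴+e¹²⁵⁶+e¹³⁶⁷+e¹⁴⁵⁷+e²³⁵⁷−e²⁴⁶⁷+e³⁴⁵⁶` is closed for the Chevalley–Eilenberg
differential; hence this Lie algebra admits a coclosed `G₂`-structure. -/
theorem heisenberg_std_four_form_closed :
    (∀ x : Fin 5 → (Fin 7 → ℝ), ceDVal brk17 psiStd x = 0) ∧
    ∃ b : Module.Basis (Fin 7) ℝ (Fin 7 → ℝ),
      ∀ x : Fin 5 → (Fin 7 → ℝ), ceDVal brk17 (psiStdB b) x = 0 := by
  have hb : psiStdB (Pi.basisFun ℝ (Fin 7)) = psiStd := by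
    ext v
    simp [psiStdB, Pi.basisFun_equivFun]
  exact ⟨key, Pi.basisFun ℝ (Fin 7), fun x => by rw [hb]; exact key x⟩

end
end

section
/- Let g be a 7-dimensional Lie algebra with nontrivial center, φ a coclosed G₂-structure on g with dual 4-form φ̂ = ⋆_φ φ, and X a unit central vector. Then the 3-form ψ₋ = −ι_X φ̂, viewed on the quotient h = g/⟨X⟩, is closed with respect to the Chevalley–Eilenberg differential of h. -/
open scoped BigOperators

noncomputable section

private lemma swapConsAux {V : Type*} [AddCommGroup V] [Module ℝ V]
    (ψ : AlternatingMap ℝ V ℝ (Fin 4)) (A X : V) (f : Fin 2 → V) :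
    ψ (Fin.cons A (Fin.cons X f)) = - ψ (Fin.cons X (Fin.cons A f)) := by
  have h : (Fin.cons X (Fin.cons A f) : Fin 4 → V) ∘ Equiv.swap (0 : Fin 4) 1
      = Fin.cons A (Fin.cons X f) := by
    funext t
    refine Fin.cases ?_ (fun t1 => Fin.cases ?_ (fun t2 => ?_) t1) t
    · simp [Equiv.swap_apply_left]
    · simp [show ((0:Fin 3).succ : Fin 4) = 1 from rfl, Equiv.swap_apply_right]
    · have h0 : (t2.succ.succ : Fin 4) ≠ 0 := Fin.succ_ne_zero _
      have h1 : (t2.succ.succ : Fin 4) ≠ 1 := by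
        intro hh
        exact Fin.succ_ne_zero t2 (Fin.succ_injective _ hh)
      simp [Equiv.swap_apply_of_ne_of_ne h0 h1, Fin.cons_succ]
  rw [← h, AlternatingMap.map_swap _ _ (by decide : (0 : Fin 4) ≠ 1)]

private lemma consZeroAux {V : Type*} [AddCommGroup V] [Module ℝ V] {n : ℕ}
    (ψ : AlternatingMap ℝ V ℝ (Fin (n+1))) (f : Fin n → V) :
    ψ (Fin.cons 0 f) = 0 :=
  ψ.map_coord_zero 0 (by simp)

private lemma keyAux {V : Type*} [AddCommGroup V] [Module ℝ V] (B : V → V → V)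
    (ψ : AlternatingMap ℝ V ℝ (Fin 4)) (X : V) (hX : ∀ v, B X v = 0)
    (y : Fin 4 → V) :
    ceDVal B (-(ψ.curryLeft X)) y = ceDVal B ψ (Fin.cons X y) := by
  unfold ceDVal
  conv_rhs => rw [Fin.sum_univ_succ]
  simp only [Fin.cons_zero, Fin.cons_succ, hX, consZeroAux, mul_zero, ite_self,
    Finset.sum_const_zero, zero_add]
  refine Finset.sum_congr rfl fun j _ => ?_
  conv_rhs => rw [Fin.sum_univ_succ]
  rw [if_neg (show ¬(((j.succ : Fin 5) : ℕ) ≤ (((0:Fin 4)) : ℕ)) by simp), zero_add]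
  refine Finset.sum_congr rfl fun m _ => ?_
  have hcond : (((j.succ : Fin 5) : ℕ) ≤ ((m.succ : Fin 4) : ℕ)) ↔ ((j:ℕ) ≤ (m:ℕ)) := by
    simp [Fin.val_succ]
  by_cases hc : (j:ℕ) ≤ (m:ℕ)
  · rw [if_pos hc, if_pos (hcond.mpr hc)]
    have hsab : (j.succ).succAbove m.succ = (j.succAbove m).succ := Fin.succ_succAbove_succ j m
    have harg1 : (Fin.cons X y : Fin 5 → V) ((j.succ).succAbove m.succ) = y (j.succAbove m) := by
      rw [hsab, Fin.cons_succ]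
    have htail : (fun l : Fin 3 => (Fin.cons X y : Fin 5 → V) ((j.succ).succAbove ((m.succ).succAbove l)))
        = Fin.cons X (fun l' : Fin 2 => y (j.succAbove (m.succAbove l'))) := by
      funext l
      refine Fin.cases ?_ (fun l' => ?_) l
      · rw [Fin.succ_succAbove_zero, Fin.succ_succAbove_zero, Fin.cons_zero, Fin.cons_zero]
      · rw [Fin.succ_succAbove_succ, Fin.succ_succAbove_succ, Fin.cons_succ, Fin.cons_succ]
    rw [harg1, htail, swapConsAux]
    have hsign : ((-1 : ℝ)) ^ (((j.succ : Fin 5) : ℕ) + (((j.succ).succAbove m.succ : Fin 5) : ℕ))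
        = (-1 : ℝ) ^ ((j : ℕ) + ((j.succAbove m : Fin 4) : ℕ)) := by
      rw [hsab]
      simp only [Fin.val_succ]
      rw [show (j:ℕ) + 1 + ((j.succAbove m : Fin 4) + 1) = ((j:ℕ) + (j.succAbove m : Fin 4)) + 2 by ring, pow_add]
      norm_num
    rw [hsign]
    simp only [AlternatingMap.neg_apply]
    rfl
  · rw [if_neg hc, if_neg (fun hh => hc (hcond.mp hh))]

/-- Let `g` be a 7-dimensional Lie algebra with a coclosed `G₂`-structure
`φ` (in the orthonormal coframe dual to a basis `b`, `φ = phiStdB b` and its dual 4-form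
`⋆_φ φ = psiStdB b` is closed), and let `X` be a central vector of unit length for the
induced metric `g_φ` (which makes `b` orthonormal).  If `π : g → h` is an epimorphism onto a
Lie algebra `h` with kernel `span X` (so `h ≅ g/⟨X⟩`), then the 3-form `ψ₋ = −ι_X ⋆_φ φ`,
viewed on `h` (i.e. any `ν` with `ν ∘ π = −ι_X ⋆_φ φ`), is closed for the
Chevalley–Eilenberg differential of `h`. -/
theorem pushforward_contraction_closed
    (g : Type*) [LieRing g] [LieAlgebra ℝ g] [FiniteDimensional ℝ g]
    (h7 : Module.finrank ℝ g = 7)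
    (b : Module.Basis (Fin 7) ℝ g)
    (hcoclosed : ∀ x : Fin 5 → g, ceDVal (fun u v => ⁅u, v⁆) (psiStdB b) x = 0)
    (X : g) (hXcentral : ∀ y : g, ⁅X, y⁆ = 0)
    (hXunit : ∑ i : Fin 7, (b.repr X i) ^ 2 = 1)
    (h : Type*) [LieRing h] [LieAlgebra ℝ h]
    (π : g →ₗ⁅ℝ⁆ h) (hπ : Function.Surjective π)
    (hker : ∀ y : g, π y = 0 ↔ y ∈ Submodule.span ℝ ({X} : Set g))
    (ν : AlternatingMap ℝ h ℝ (Fin 3))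
    (hν : ∀ x : Fin 3 → g, ν (fun i => π (x i)) = -((psiStdB b).curryLeft X) x) :
    ∀ x : Fin 4 → h, ceDVal (fun u v => ⁅u, v⁆) ν x = 0 := by
  intro x
  choose y hy using fun i => hπ (x i)
  have hx : x = fun i => π (y i) := funext fun i => (hy i).symm
  have h1 : ceDVal (fun u v : h => ⁅u, v⁆) ν (fun i => π (y i))
      = ceDVal (fun u v : g => ⁅u, v⁆) (-((psiStdB b).curryLeft X)) y := by
    unfold ceDVal
    refine Finset.sum_congr rfl fun i _ => Finset.sum_congr rfl fun m _ => ?_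
    by_cases hc : (i : ℕ) ≤ (m : ℕ)
    · rw [if_pos hc, if_pos hc]
      have harg : (Fin.cons ⁅π (y i), π (y (i.succAbove m))⁆
            (fun l : Fin 2 => π (y (i.succAbove (m.succAbove l)))) : Fin 3 → h)
          = fun t => π ((Fin.cons ⁅y i, y (i.succAbove m)⁆
            (fun l : Fin 2 => y (i.succAbove (m.succAbove l))) : Fin 3 → g) t) := by
        funext t
        refine Fin.cases ?_ (fun t' => ?_) t
        · simp
        · simp [Fin.cons_succ]
      rw [harg, hν]
      simp only [AlternatingMap.neg_apply]
    · rw [if_neg hc, if_neg hc]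
  rw [hx, h1, keyAux (fun u v : g => ⁅u, v⁆) (psiStdB b) X (fun v => hXcentral v) y]
  exact hcoclosed (Fin.cons X y)


end
end

section
/- On the Lie algebra l₁ = (0,0,0,12,13−24,14+23,0), for the 3-form ν = −π_*(ι_{e₇}τ) obtained from any closed 4-form τ (with π : l₁ → l₁/⟨e₇⟩ the projection), the associated endomorphism K_ν of the 6-dimensional quotient preserves the flag span(e₁,e₂) ⊂ span(e₁,e₂,e₃,e₄); in particular span(e₃,e₄,e₅,e₆) is invariant under the almost complex structure J_ν whenever ν is a negative stable 3-form. -/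
open scoped BigOperators

noncomputable section

/-- The Lie bracket of `l₁ = (0,0,0,12,13−24,14+23,0)` on `ℝ⁷` (so `de⁴ = e¹²`,
`de⁵ = e¹³ − e²⁴`, `de⁶ = e¹⁴ + e²³`, other `deⁱ = 0`; `e₇` is central). -/
def brkL1 : (Fin 7 → ℝ) → (Fin 7 → ℝ) → (Fin 7 → ℝ) := fun x y =>
  ![0, 0, 0, -(x 0 * y 1 - x 1 * y 0),
    -((x 0 * y 2 - x 2 * y 0) - (x 1 * y 3 - x 3 * y 1)),
    -((x 0 * y 3 - x 3 * y 0) + (x 1 * y 2 - x 2 * y 1)), 0]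


/-! ### Auxiliary machinery for the proof -/

def e7v (i : Fin 7) : Fin 7 → ℝ := Pi.single i 1
def e6v (i : Fin 6) : Fin 6 → ℝ := Pi.single i 1
def wtAux : Fin 6 → ℕ := ![0, 0, 1, 1, 2, 2]

lemma brk01 : brkL1 (e7v 0) (e7v 1) = -e7v 3 := by
  funext k; fin_cases k <;> (try simp (config := { decide := true }) [brkL1, e7v, Pi.single_apply, Fin.ext_iff]) <;> rfl
lemma brk02 : brkL1 (e7v 0) (e7v 2) = -e7v 4 := by
  funext k; fin_cases k <;> (try simp (config := { decide := true }) [brkL1, e7v, Pi.single_apply, Fin.ext_iff]) <;> rfl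
lemma brk03 : brkL1 (e7v 0) (e7v 3) = -e7v 5 := by
  funext k; fin_cases k <;> (try simp (config := { decide := true }) [brkL1, e7v, Pi.single_apply, Fin.ext_iff]) <;> rfl
lemma brk12 : brkL1 (e7v 1) (e7v 2) = -e7v 5 := by
  funext k; fin_cases k <;> (try simp (config := { decide := true }) [brkL1, e7v, Pi.single_apply, Fin.ext_iff]) <;> rfl
lemma brk13 : brkL1 (e7v 1) (e7v 3) = e7v 4 := by
  funext k; fin_cases k <;> (try simp (config := { decide := true }) [brkL1, e7v, Pi.single_apply, Fin.ext_iff]) <;> rfl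
lemma brk23 : brkL1 (e7v 2) (e7v 3) = 0 := by
  funext k; fin_cases k <;> (try simp (config := { decide := true }) [brkL1, e7v, Pi.single_apply, Fin.ext_iff]) <;> rfl
lemma brk04 : brkL1 (e7v 0) (e7v 4) = 0 := by
  funext k; fin_cases k <;> (try simp (config := { decide := true }) [brkL1, e7v, Pi.single_apply, Fin.ext_iff]) <;> rfl
lemma brk05 : brkL1 (e7v 0) (e7v 5) = 0 := by
  funext k; fin_cases k <;> (try simp (config := { decide := true }) [brkL1, e7v, Pi.single_apply, Fin.ext_iff]) <;> rfl
lemma brk14 : brkL1 (e7v 1) (e7v 4) = 0 := by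
  funext k; fin_cases k <;> (try simp (config := { decide := true }) [brkL1, e7v, Pi.single_apply, Fin.ext_iff]) <;> rfl
lemma brk15 : brkL1 (e7v 1) (e7v 5) = 0 := by
  funext k; fin_cases k <;> (try simp (config := { decide := true }) [brkL1, e7v, Pi.single_apply, Fin.ext_iff]) <;> rfl
lemma brk24 : brkL1 (e7v 2) (e7v 4) = 0 := by
  funext k; fin_cases k <;> (try simp (config := { decide := true }) [brkL1, e7v, Pi.single_apply, Fin.ext_iff]) <;> rfl
lemma brk25 : brkL1 (e7v 2) (e7v 5) = 0 := by
  funext k; fin_cases k <;> (try simp (config := { decide := true }) [brkL1, e7v, Pi.single_apply, Fin.ext_iff]) <;> rfl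
lemma brk34 : brkL1 (e7v 3) (e7v 4) = 0 := by
  funext k; fin_cases k <;> (try simp (config := { decide := true }) [brkL1, e7v, Pi.single_apply, Fin.ext_iff]) <;> rfl
lemma brk35 : brkL1 (e7v 3) (e7v 5) = 0 := by
  funext k; fin_cases k <;> (try simp (config := { decide := true }) [brkL1, e7v, Pi.single_apply, Fin.ext_iff]) <;> rfl
lemma brk45 : brkL1 (e7v 4) (e7v 5) = 0 := by
  funext k; fin_cases k <;> (try simp (config := { decide := true }) [brkL1, e7v, Pi.single_apply, Fin.ext_iff]) <;> rfl
lemma brkR6 (v : Fin 7 → ℝ) : brkL1 v (e7v 6) = 0 := by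
  funext k; fin_cases k <;> (try simp (config := { decide := true }) [brkL1, e7v, Pi.single_apply, Fin.ext_iff]) <;> rfl

lemma ceD5 {V : Type*} [AddCommGroup V] [Module ℝ V] (B : V → V → V)
    (κ : AlternatingMap ℝ V ℝ (Fin 4)) (x : Fin 5 → V) :
    ceDVal B κ x =
      ∑ i : Fin 5, ∑ m : Fin 4,
        if (i : ℕ) ≤ (m : ℕ) then
          (-1 : ℝ) ^ ((i : ℕ) + ((i.succAbove m : Fin 5) : ℕ)) *
            κ (Fin.cons (B (x i) (x (i.succAbove m)))
                fun l : Fin 3 => x (i.succAbove (m.succAbove l)))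
        else 0 := rfl

section tauAux
variable (τ : AlternatingMap ℝ (Fin 7 → ℝ) ℝ (Fin 4))

lemma eta4 (v : Fin 7 → ℝ) (y : Fin 3 → (Fin 7 → ℝ)) :
    τ (Fin.cons v y) = τ ![v, y 0, y 1, y 2] := by
  congr 1; funext i; fin_cases i <;> rfl

lemma tzero (a b c : Fin 7 → ℝ) : τ ![0, a, b, c] = 0 :=
  τ.map_coord_zero 0 rfl

lemma tneg (v a b c : Fin 7 → ℝ) : τ ![-v, a, b, c] = -τ ![v, a, b, c] := by
  have h1 : (Function.update ![v, a, b, c] 0 (-v)) = ![-v, a, b, c] := by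
    funext i; fin_cases i <;> simp [Function.update]
  have h2 : (Function.update ![v, a, b, c] 0 v) = ![v, a, b, c] := by
    funext i; fin_cases i <;> simp [Function.update]
  have := τ.map_update_neg ![v, a, b, c] 0 v
  rwa [h1, h2] at this

lemma tsw01 (v0 v1 v2 v3 : Fin 7 → ℝ) : τ ![v1, v0, v2, v3] = -τ ![v0, v1, v2, v3] := by
  have h := τ.map_swap (v := ![v0, v1, v2, v3]) (show (0 : Fin 4) ≠ 1 by decide)
  rw [show ![v0, v1, v2, v3] ∘ Equiv.swap (0:Fin 4) 1 = ![v1, v0, v2, v3] from by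
    funext i; fin_cases i <;> simp [Equiv.swap_apply_def]] at h
  exact h

lemma tsw12 (v0 v1 v2 v3 : Fin 7 → ℝ) : τ ![v0, v2, v1, v3] = -τ ![v0, v1, v2, v3] := by
  have h := τ.map_swap (v := ![v0, v1, v2, v3]) (show (1 : Fin 4) ≠ 2 by decide)
  rw [show ![v0, v1, v2, v3] ∘ Equiv.swap (1:Fin 4) 2 = ![v0, v2, v1, v3] from by
    funext i; fin_cases i <;> simp [Equiv.swap_apply_def]] at h
  exact h

lemma tsw23 (v0 v1 v2 v3 : Fin 7 → ℝ) : τ ![v0, v1, v3, v2] = -τ ![v0, v1, v2, v3] := by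
  have h := τ.map_swap (v := ![v0, v1, v2, v3]) (show (2 : Fin 4) ≠ 3 by decide)
  rw [show ![v0, v1, v2, v3] ∘ Equiv.swap (2:Fin 4) 3 = ![v0, v1, v3, v2] from by
    funext i; fin_cases i <;> simp [Equiv.swap_apply_def]] at h
  exact h

lemma t6front (a b c : Fin 7 → ℝ) : τ ![e7v 6, a, b, c] = -τ ![a, b, c, e7v 6] := by
  rw [tsw01, tsw12, tsw23]; ring

lemma tdup01 (a b c : Fin 7 → ℝ) : τ ![a, a, b, c] = 0 :=
  τ.map_eq_zero_of_eq _ (show Matrix.vecCons a ![a,b,c] 0 = ![a,a,b,c] 1 from rfl)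
    (show (0:Fin 4) ≠ 1 by decide)
lemma tdup02 (a b c : Fin 7 → ℝ) : τ ![a, b, a, c] = 0 :=
  τ.map_eq_zero_of_eq _ (show ![a,b,a,c] 0 = ![a,b,a,c] 2 from rfl)
    (show (0:Fin 4) ≠ 2 by decide)
lemma tdup03 (a b c : Fin 7 → ℝ) : τ ![a, b, c, a] = 0 :=
  τ.map_eq_zero_of_eq _ (show ![a,b,c,a] 0 = ![a,b,c,a] 3 from rfl)
    (show (0:Fin 4) ≠ 3 by decide)
lemma tdup12 (a b c : Fin 7 → ℝ) : τ ![a, b, b, c] = 0 :=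
  τ.map_eq_zero_of_eq _ (show ![a,b,b,c] 1 = ![a,b,b,c] 2 from rfl)
    (show (1:Fin 4) ≠ 2 by decide)

def Tv (a b c : Fin 7) : ℝ := τ ![e7v a, e7v b, e7v c, e7v 6]

lemma tvsw1 (a b c : Fin 7) : Tv τ b a c = -Tv τ a b c :=
  tsw01 τ (e7v a) (e7v b) (e7v c) (e7v 6)
lemma tvsw2 (a b c : Fin 7) : Tv τ a c b = -Tv τ a b c :=
  tsw12 τ (e7v a) (e7v b) (e7v c) (e7v 6)

variable (hτ : ∀ x : Fin 5 → (Fin 7 → ℝ), ceDVal brkL1 τ x = 0)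
include hτ


lemma auxeqA : -Tv τ 5 1 4 = 0 := by
  have h := hτ ![e7v 0, e7v 1, e7v 3, e7v 4, e7v 6]
  rw [ceD5] at h
  simp only [Fin.sum_univ_five, Fin.sum_univ_four, (show ((0:Fin 5).succAbove (0:Fin 4)) = 1 by decide), (show ((0:Fin 5).succAbove (1:Fin 4)) = 2 by decide), (show ((0:Fin 5).succAbove (2:Fin 4)) = 3 by decide), (show ((0:Fin 5).succAbove (3:Fin 4)) = 4 by decide), (show ((1:Fin 5).succAbove (0:Fin 4)) = 0 by decide), (show ((1:Fin 5).succAbove (1:Fin 4)) = 2 by decide), (show ((1:Fin 5).succAbove (2:Fin 4)) = 3 by decide), (show ((1:Fin 5).succAbove (3:Fin 4)) = 4 by decide), (show ((2:Fin 5).succAbove (0:Fin 4)) = 0 by decide), (show ((2:Fin 5).succAbove (1:Fin 4)) = 1 by decide), (show ((2:Fin 5).succAbove (2:Fin 4)) = 3 by decide), (show ((2:Fin 5).succAbove (3:Fin 4)) = 4 by decide), (show ((3:Fin 5).succAbove (0:Fin 4)) = 0 by decide), (show ((3:Fin 5).succAbove (1:Fin 4)) = 1 by decide), (show ((3:Fin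 5).succAbove (2:Fin 4)) = 2 by decide), (show ((3:Fin 5).succAbove (3:Fin 4)) = 4 by decide), (show ((4:Fin 5).succAbove (0:Fin 4)) = 0 by decide), (show ((4:Fin 5).succAbove (1:Fin 4)) = 1 by decide), (show ((4:Fin 5).succAbove (2:Fin 4)) = 2 by decide), (show ((4:Fin 5).succAbove (3:Fin 4)) = 3 by decide), (show ((0:Fin 4).succAbove (0:Fin 3)) = 1 by decide), (show ((0:Fin 4).succAbove (1:Fin 3)) = 2 by decide), (show ((0:Fin 4).succAbove (2:Fin 3)) = 3 by decide), (show ((1:Fin 4).succAbove (0:Fin 3)) = 0 by decide), (show ((1:Fin 4).succAbove (1:Fin 3)) = 2 by decide), (show ((1:Fin 4).succAbove (2:Fin 3)) = 3 by decide), (show ((2:Fin 4).succAbove (0:Fin 3)) = 0 by decide), (show ((2:Fin 4).succAbove (1:Fin 3)) = 1 by decide), (show ((2:Fin 4).succAbove (2:Fin 3)) = 3 by decide), (show ((3:Fin 4).succAbove (0:Fin 3)) = 0 by decide), (show ((3:Fin 4).succAbove (1:Fin 3)) = 1 by decide), (show ((3:Fin 4).succAbove (2:Fin 3)) = 2 by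 decide), (show (((0:Fin 5)):ℕ) = 0 by decide), (show (((1:Fin 5)):ℕ) = 1 by decide), (show (((2:Fin 5)):ℕ) = 2 by decide), (show (((3:Fin 5)):ℕ) = 3 by decide), (show (((4:Fin 5)):ℕ) = 4 by decide), (show (((0:Fin 4)):ℕ) = 0 by decide), (show (((1:Fin 4)):ℕ) = 1 by decide), (show (((2:Fin 4)):ℕ) = 2 by decide), (show (((3:Fin 4)):ℕ) = 3 by decide)] at h
  simp (config := { decide := true }) [eta4, Fin.succAbove, Fin.lt_def,
    (show (Fin.castSucc (2:Fin 3)) = (2:Fin 4) by decide),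
    (show ((2:Fin 4).castSucc : Fin 5) = 2 by decide)] at h
  simp only [brk01, brk02, brk03, brk04, brk05, brk12, brk13, brk14, brk15, brk23, brk24,
    brk25, brk34, brk35, brk45, brkR6, tzero, tneg, tdup01, tdup02, tdup03, tdup12, neg_neg, neg_zero,
    mul_neg, mul_zero, add_zero, zero_add, one_mul] at h
  simp only [(show ∀ a b c : Fin 7, τ ![e7v a, e7v b, e7v c, e7v 6] = Tv τ a b c from fun _ _ _ => rfl)] at h
  linarith

lemma auxeqB : -Tv τ 4 0 5 = 0 := by
  have h := hτ ![e7v 0, e7v 1, e7v 3, e7v 5, e7v 6]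
  rw [ceD5] at h
  simp only [Fin.sum_univ_five, Fin.sum_univ_four, (show ((0:Fin 5).succAbove (0:Fin 4)) = 1 by decide), (show ((0:Fin 5).succAbove (1:Fin 4)) = 2 by decide), (show ((0:Fin 5).succAbove (2:Fin 4)) = 3 by decide), (show ((0:Fin 5).succAbove (3:Fin 4)) = 4 by decide), (show ((1:Fin 5).succAbove (0:Fin 4)) = 0 by decide), (show ((1:Fin 5).succAbove (1:Fin 4)) = 2 by decide), (show ((1:Fin 5).succAbove (2:Fin 4)) = 3 by decide), (show ((1:Fin 5).succAbove (3:Fin 4)) = 4 by decide), (show ((2:Fin 5).succAbove (0:Fin 4)) = 0 by decide), (show ((2:Fin 5).succAbove (1:Fin 4)) = 1 by decide), (show ((2:Fin 5).succAbove (2:Fin 4)) = 3 by decide), (show ((2:Fin 5).succAbove (3:Fin 4)) = 4 by decide), (show ((3:Fin 5).succAbove (0:Fin 4)) = 0 by decide), (show ((3:Fin 5).succAbove (1:Fin 4)) = 1 by decide), (show ((3:Fin 5).succAbove (2:Fin 4)) = 2 by decide), (show ((3:Fin 5).succAbove (3:Fin 4)) = 4 by decide), (show ((4:Fin 5).succAbove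 (0:Fin 4)) = 0 by decide), (show ((4:Fin 5).succAbove (1:Fin 4)) = 1 by decide), (show ((4:Fin 5).succAbove (2:Fin 4)) = 2 by decide), (show ((4:Fin 5).succAbove (3:Fin 4)) = 3 by decide), (show ((0:Fin 4).succAbove (0:Fin 3)) = 1 by decide), (show ((0:Fin 4).succAbove (1:Fin 3)) = 2 by decide), (show ((0:Fin 4).succAbove (2:Fin 3)) = 3 by decide), (show ((1:Fin 4).succAbove (0:Fin 3)) = 0 by decide), (show ((1:Fin 4).succAbove (1:Fin 3)) = 2 by decide), (show ((1:Fin 4).succAbove (2:Fin 3)) = 3 by decide), (show ((2:Fin 4).succAbove (0:Fin 3)) = 0 by decide), (show ((2:Fin 4).succAbove (1:Fin 3)) = 1 by decide), (show ((2:Fin 4).succAbove (2:Fin 3)) = 3 by decide), (show ((3:Fin 4).succAbove (0:Fin 3)) = 0 by decide), (show ((3:Fin 4).succAbove (1:Fin 3)) = 1 by decide), (show ((3:Fin 4).succAbove (2:Fin 3)) = 2 by decide), (show (((0:Fin 5)):ℕ) = 0 by decide), (show (((1:Fin 5)):ℕ) = 1 by decide), (show (((2:Fin 5)):ℕ) =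 2 by decide), (show (((3:Fin 5)):ℕ) = 3 by decide), (show (((4:Fin 5)):ℕ) = 4 by decide), (show (((0:Fin 4)):ℕ) = 0 by decide), (show (((1:Fin 4)):ℕ) = 1 by decide), (show (((2:Fin 4)):ℕ) = 2 by decide), (show (((3:Fin 4)):ℕ) = 3 by decide)] at h
  simp (config := { decide := true }) [eta4, Fin.succAbove, Fin.lt_def,
    (show (Fin.castSucc (2:Fin 3)) = (2:Fin 4) by decide),
    (show ((2:Fin 4).castSucc : Fin 5) = 2 by decide)] at h
  simp only [brk01, brk02, brk03, brk04, brk05, brk12, brk13, brk14, brk15, brk23, brk24,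
    brk25, brk34, brk35, brk45, brkR6, tzero, tneg, tdup01, tdup02, tdup03, tdup12, neg_neg, neg_zero,
    mul_neg, mul_zero, add_zero, zero_add, one_mul] at h
  simp only [(show ∀ a b c : Fin 7, τ ![e7v a, e7v b, e7v c, e7v 6] = Tv τ a b c from fun _ _ _ => rfl)] at h
  linarith

lemma auxeqC : Tv τ 3 2 4 + Tv τ 5 0 4 = 0 := by
  have h := hτ ![e7v 0, e7v 1, e7v 2, e7v 4, e7v 6]
  rw [ceD5] at h
  simp only [Fin.sum_univ_five, Fin.sum_univ_four, (show ((0:Fin 5).succAbove (0:Fin 4)) = 1 by decide), (show ((0:Fin 5).succAbove (1:Fin 4)) = 2 by decide), (show ((0:Fin 5).succAbove (2:Fin 4)) = 3 by decide), (show ((0:Fin 5).succAbove (3:Fin 4)) = 4 by decide), (show ((1:Fin 5).succAbove (0:Fin 4)) = 0 by decide), (show ((1:Fin 5).succAbove (1:Fin 4)) = 2 by decide), (show ((1:Fin 5).succAbove (2:Fin 4)) = 3 by decide), (show ((1:Fin 5).succAbove (3:Fin 4)) = 4 by decide), (show ((2:Fin 5).succAbove (0:Fin 4)) = 0 by decide),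 (show ((2:Fin 5).succAbove (1:Fin 4)) = 1 by decide), (show ((2:Fin 5).succAbove (2:Fin 4)) = 3 by decide), (show ((2:Fin 5).succAbove (3:Fin 4)) = 4 by decide), (show ((3:Fin 5).succAbove (0:Fin 4)) = 0 by decide), (show ((3:Fin 5).succAbove (1:Fin 4)) = 1 by decide), (show ((3:Fin 5).succAbove (2:Fin 4)) = 2 by decide), (show ((3:Fin 5).succAbove (3:Fin 4)) = 4 by decide), (show ((4:Fin 5).succAbove (0:Fin 4)) = 0 by decide), (show ((4:Fin 5).succAbove (1:Fin 4)) = 1 by decide), (show ((4:Fin 5).succAbove (2:Fin 4)) = 2 by decide), (show ((4:Fin 5).succAbove (3:Fin 4)) = 3 by decide), (show ((0:Fin 4).succAbove (0:Fin 3)) = 1 by decide), (show ((0:Fin 4).succAbove (1:Fin 3)) = 2 by decide), (show ((0:Fin 4).succAbove (2:Fin 3)) = 3 by decide), (show ((1:Fin 4).succAbove (0:Fin 3)) = 0 by decide), (show ((1:Fin 4).succAbove (1:Fin 3)) = 2 by decide), (show ((1:Fin 4).succAbove (2:Fin 3)) = 3 by decide), (show ((2:Fin 4).succAbove (0:Fin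 3)) = 0 by decide), (show ((2:Fin 4).succAbove (1:Fin 3)) = 1 by decide), (show ((2:Fin 4).succAbove (2:Fin 3)) = 3 by decide), (show ((3:Fin 4).succAbove (0:Fin 3)) = 0 by decide), (show ((3:Fin 4).succAbove (1:Fin 3)) = 1 by decide), (show ((3:Fin 4).succAbove (2:Fin 3)) = 2 by decide), (show (((0:Fin 5)):ℕ) = 0 by decide), (show (((1:Fin 5)):ℕ) = 1 by decide), (show (((2:Fin 5)):ℕ) = 2 by decide), (show (((3:Fin 5)):ℕ) = 3 by decide), (show (((4:Fin 5)):ℕ) = 4 by decide), (show (((0:Fin 4)):ℕ) = 0 by decide), (show (((1:Fin 4)):ℕ) = 1 by decide), (show (((2:Fin 4)):ℕ) = 2 by decide), (show (((3:Fin 4)):ℕ) = 3 by decide)] at h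
  simp (config := { decide := true }) [eta4, Fin.succAbove, Fin.lt_def,
    (show (Fin.castSucc (2:Fin 3)) = (2:Fin 4) by decide),
    (show ((2:Fin 4).castSucc : Fin 5) = 2 by decide)] at h
  simp only [brk01, brk02, brk03, brk04, brk05, brk12, brk13, brk14, brk15, brk23, brk24,
    brk25, brk34, brk35, brk45, brkR6, tzero, tneg, tdup01, tdup02, tdup03, tdup12, neg_neg, neg_zero,
    mul_neg, mul_zero, add_zero, zero_add, one_mul] at h
  simp only [(show ∀ a b c : Fin 7, τ ![e7v a, e7v b, e7v c, e7v 6] = Tv τ a b c from fun _ _ _ => rfl)] at h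
  linarith

lemma auxeqD : Tv τ 3 2 5 + -Tv τ 4 1 5 = 0 := by
  have h := hτ ![e7v 0, e7v 1, e7v 2, e7v 5, e7v 6]
  rw [ceD5] at h
  simp only [Fin.sum_univ_five, Fin.sum_univ_four, (show ((0:Fin 5).succAbove (0:Fin 4)) = 1 by decide), (show ((0:Fin 5).succAbove (1:Fin 4)) = 2 by decide), (show ((0:Fin 5).succAbove (2:Fin 4)) = 3 by decide), (show ((0:Fin 5).succAbove (3:Fin 4)) = 4 by decide), (show ((1:Fin 5).succAbove (0:Fin 4)) = 0 by decide), (show ((1:Fin 5).succAbove (1:Fin 4)) = 2 by decide), (show ((1:Fin 5).succAbove (2:Fin 4)) = 3 by decide), (show ((1:Fin 5).succAbove (3:Fin 4)) = 4 by decide), (show ((2:Fin 5).succAbove (0:Fin 4)) = 0 by decide), (show ((2:Fin 5).succAbove (1:Fin 4)) = 1 by decide), (show ((2:Fin 5).succAbove (2:Fin 4)) = 3 by decide), (show ((2:Fin 5).succAbove (3:Fin 4)) = 4 by decide), (show ((3:Fin 5).succAbove (0:Fin 4)) = 0 by decide), (show ((3:Fin 5).succAbove (1:Fin 4)) = 1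 by decide), (show ((3:Fin 5).succAbove (2:Fin 4)) = 2 by decide), (show ((3:Fin 5).succAbove (3:Fin 4)) = 4 by decide), (show ((4:Fin 5).succAbove (0:Fin 4)) = 0 by decide), (show ((4:Fin 5).succAbove (1:Fin 4)) = 1 by decide), (show ((4:Fin 5).succAbove (2:Fin 4)) = 2 by decide), (show ((4:Fin 5).succAbove (3:Fin 4)) = 3 by decide), (show ((0:Fin 4).succAbove (0:Fin 3)) = 1 by decide), (show ((0:Fin 4).succAbove (1:Fin 3)) = 2 by decide), (show ((0:Fin 4).succAbove (2:Fin 3)) = 3 by decide), (show ((1:Fin 4).succAbove (0:Fin 3)) = 0 by decide), (show ((1:Fin 4).succAbove (1:Fin 3)) = 2 by decide), (show ((1:Fin 4).succAbove (2:Fin 3)) = 3 by decide), (show ((2:Fin 4).succAbove (0:Fin 3)) = 0 by decide), (show ((2:Fin 4).succAbove (1:Fin 3)) = 1 by decide), (show ((2:Fin 4).succAbove (2:Fin 3)) = 3 by decide), (show ((3:Fin 4).succAbove (0:Fin 3)) = 0 by decide), (show ((3:Fin 4).succAbove (1:Fin 3)) = 1 by decide), (show ((3:Fin 4).succAbove (2:Fin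 3)) = 2 by decide), (show (((0:Fin 5)):ℕ) = 0 by decide), (show (((1:Fin 5)):ℕ) = 1 by decide), (show (((2:Fin 5)):ℕ) = 2 by decide), (show (((3:Fin 5)):ℕ) = 3 by decide), (show (((4:Fin 5)):ℕ) = 4 by decide), (show (((0:Fin 4)):ℕ) = 0 by decide), (show (((1:Fin 4)):ℕ) = 1 by decide), (show (((2:Fin 4)):ℕ) = 2 by decide), (show (((3:Fin 4)):ℕ) = 3 by decide)] at h
  simp (config := { decide := true }) [eta4, Fin.succAbove, Fin.lt_def,
    (show (Fin.castSucc (2:Fin 3)) = (2:Fin 4) by decide),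
    (show ((2:Fin 4).castSucc : Fin 5) = 2 by decide)] at h
  simp only [brk01, brk02, brk03, brk04, brk05, brk12, brk13, brk14, brk15, brk23, brk24,
    brk25, brk34, brk35, brk45, brkR6, tzero, tneg, tdup01, tdup02, tdup03, tdup12, neg_neg, neg_zero,
    mul_neg, mul_zero, add_zero, zero_add, one_mul] at h
  simp only [(show ∀ a b c : Fin 7, τ ![e7v a, e7v b, e7v c, e7v 6] = Tv τ a b c from fun _ _ _ => rfl)] at h
  linarith

lemma auxeqE : -Tv τ 5 2 4 = 0 := by
  have h := hτ ![e7v 0, e7v 2, e7v 3, e7v 4, e7v 6]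
  rw [ceD5] at h
  simp only [Fin.sum_univ_five, Fin.sum_univ_four, (show ((0:Fin 5).succAbove (0:Fin 4)) = 1 by decide), (show ((0:Fin 5).succAbove (1:Fin 4)) = 2 by decide), (show ((0:Fin 5).succAbove (2:Fin 4)) = 3 by decide), (show ((0:Fin 5).succAbove (3:Fin 4)) = 4 by decide), (show ((1:Fin 5).succAbove (0:Fin 4)) = 0 by decide), (show ((1:Fin 5).succAbove (1:Fin 4)) = 2 by decide), (show ((1:Fin 5).succAbove (2:Fin 4)) = 3 by decide), (show ((1:Fin 5).succAbove (3:Fin 4)) = 4 by decide), (show ((2:Fin 5).succAbove (0:Fin 4)) = 0 by decide), (show ((2:Fin 5).succAbove (1:Fin 4)) = 1 by decide), (show ((2:Fin 5).succAbove (2:Fin 4)) = 3 by decide), (show ((2:Fin 5).succAbove (3:Fin 4)) = 4 by decide), (show ((3:Fin 5).succAbove (0:Fin 4)) = 0 by decide), (show ((3:Fin 5).succAbove (1:Fin 4)) = 1 by decide), (show ((3:Fin 5).succAbove (2:Fin 4)) = 2 by decide), (show ((3:Fin 5).succAbove (3:Fin 4)) = 4 by decide), (show ((4:Fin 5).succAbove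 (0:Fin 4)) = 0 by decide), (show ((4:Fin 5).succAbove (1:Fin 4)) = 1 by decide), (show ((4:Fin 5).succAbove (2:Fin 4)) = 2 by decide), (show ((4:Fin 5).succAbove (3:Fin 4)) = 3 by decide), (show ((0:Fin 4).succAbove (0:Fin 3)) = 1 by decide), (show ((0:Fin 4).succAbove (1:Fin 3)) = 2 by decide), (show ((0:Fin 4).succAbove (2:Fin 3)) = 3 by decide), (show ((1:Fin 4).succAbove (0:Fin 3)) = 0 by decide), (show ((1:Fin 4).succAbove (1:Fin 3)) = 2 by decide), (show ((1:Fin 4).succAbove (2:Fin 3)) = 3 by decide), (show ((2:Fin 4).succAbove (0:Fin 3)) = 0 by decide), (show ((2:Fin 4).succAbove (1:Fin 3)) = 1 by decide), (show ((2:Fin 4).succAbove (2:Fin 3)) = 3 by decide), (show ((3:Fin 4).succAbove (0:Fin 3)) = 0 by decide), (show ((3:Fin 4).succAbove (1:Fin 3)) = 1 by decide), (show ((3:Fin 4).succAbove (2:Fin 3)) = 2 by decide), (show (((0:Fin 5)):ℕ) = 0 by decide), (show (((1:Fin 5)):ℕ) = 1 by decide), (show (((2:Fin 5)):ℕ) =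 2 by decide), (show (((3:Fin 5)):ℕ) = 3 by decide), (show (((4:Fin 5)):ℕ) = 4 by decide), (show (((0:Fin 4)):ℕ) = 0 by decide), (show (((1:Fin 4)):ℕ) = 1 by decide), (show (((2:Fin 4)):ℕ) = 2 by decide), (show (((3:Fin 4)):ℕ) = 3 by decide)] at h
  simp (config := { decide := true }) [eta4, Fin.succAbove, Fin.lt_def,
    (show (Fin.castSucc (2:Fin 3)) = (2:Fin 4) by decide),
    (show ((2:Fin 4).castSucc : Fin 5) = 2 by decide)] at h
  simp only [brk01, brk02, brk03, brk04, brk05, brk12, brk13, brk14, brk15, brk23, brk24,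
    brk25, brk34, brk35, brk45, brkR6, tzero, tneg, tdup01, tdup02, tdup03, tdup12, neg_neg, neg_zero,
    mul_neg, mul_zero, add_zero, zero_add, one_mul] at h
  simp only [(show ∀ a b c : Fin 7, τ ![e7v a, e7v b, e7v c, e7v 6] = Tv τ a b c from fun _ _ _ => rfl)] at h
  linarith

lemma auxeqF : Tv τ 4 3 5 = 0 := by
  have h := hτ ![e7v 0, e7v 2, e7v 3, e7v 5, e7v 6]
  rw [ceD5] at h
  simp only [Fin.sum_univ_five, Fin.sum_univ_four, (show ((0:Fin 5).succAbove (0:Fin 4)) = 1 by decide), (show ((0:Fin 5).succAbove (1:Fin 4)) = 2 by decide), (show ((0:Fin 5).succAbove (2:Fin 4)) = 3 by decide), (show ((0:Fin 5).succAbove (3:Fin 4)) = 4 by decide), (show ((1:Fin 5).succAbove (0:Fin 4)) = 0 by decide), (show ((1:Fin 5).succAbove (1:Fin 4)) = 2 by decide), (show ((1:Fin 5).succAbove (2:Fin 4)) = 3 by decide), (show ((1:Fin 5).succAbove (3:Fin 4)) = 4 by decide), (show ((2:Fin 5).succAbove (0:Fin 4)) = 0 by decide), (show ((2:Fin 5).succAbove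 (1:Fin 4)) = 1 by decide), (show ((2:Fin 5).succAbove (2:Fin 4)) = 3 by decide), (show ((2:Fin 5).succAbove (3:Fin 4)) = 4 by decide), (show ((3:Fin 5).succAbove (0:Fin 4)) = 0 by decide), (show ((3:Fin 5).succAbove (1:Fin 4)) = 1 by decide), (show ((3:Fin 5).succAbove (2:Fin 4)) = 2 by decide), (show ((3:Fin 5).succAbove (3:Fin 4)) = 4 by decide), (show ((4:Fin 5).succAbove (0:Fin 4)) = 0 by decide), (show ((4:Fin 5).succAbove (1:Fin 4)) = 1 by decide), (show ((4:Fin 5).succAbove (2:Fin 4)) = 2 by decide), (show ((4:Fin 5).succAbove (3:Fin 4)) = 3 by decide), (show ((0:Fin 4).succAbove (0:Fin 3)) = 1 by decide), (show ((0:Fin 4).succAbove (1:Fin 3)) = 2 by decide), (show ((0:Fin 4).succAbove (2:Fin 3)) = 3 by decide), (show ((1:Fin 4).succAbove (0:Fin 3)) = 0 by decide), (show ((1:Fin 4).succAbove (1:Fin 3)) = 2 by decide), (show ((1:Fin 4).succAbove (2:Fin 3)) = 3 by decide), (show ((2:Fin 4).succAbove (0:Fin 3)) = 0 by decide), (show ((2:Fin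 4).succAbove (1:Fin 3)) = 1 by decide), (show ((2:Fin 4).succAbove (2:Fin 3)) = 3 by decide), (show ((3:Fin 4).succAbove (0:Fin 3)) = 0 by decide), (show ((3:Fin 4).succAbove (1:Fin 3)) = 1 by decide), (show ((3:Fin 4).succAbove (2:Fin 3)) = 2 by decide), (show (((0:Fin 5)):ℕ) = 0 by decide), (show (((1:Fin 5)):ℕ) = 1 by decide), (show (((2:Fin 5)):ℕ) = 2 by decide), (show (((3:Fin 5)):ℕ) = 3 by decide), (show (((4:Fin 5)):ℕ) = 4 by decide), (show (((0:Fin 4)):ℕ) = 0 by decide), (show (((1:Fin 4)):ℕ) = 1 by decide), (show (((2:Fin 4)):ℕ) = 2 by decide), (show (((3:Fin 4)):ℕ) = 3 by decide)] at h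
  simp (config := { decide := true }) [eta4, Fin.succAbove, Fin.lt_def,
    (show (Fin.castSucc (2:Fin 3)) = (2:Fin 4) by decide),
    (show ((2:Fin 4).castSucc : Fin 5) = 2 by decide)] at h
  simp only [brk01, brk02, brk03, brk04, brk05, brk12, brk13, brk14, brk15, brk23, brk24,
    brk25, brk34, brk35, brk45, brkR6, tzero, tneg, tdup01, tdup02, tdup03, tdup12, neg_neg, neg_zero,
    mul_neg, mul_zero, add_zero, zero_add, one_mul] at h
  simp only [(show ∀ a b c : Fin 7, τ ![e7v a, e7v b, e7v c, e7v 6] = Tv τ a b c from fun _ _ _ => rfl)] at h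
  linarith


end tauAux

section nuAux
variable (ν : AlternatingMap ℝ (Fin 6 → ℝ) ℝ (Fin 3))

lemma neta3' (y : Fin 3 → (Fin 6 → ℝ)) : ν y = ν ![y 0, y 1, y 2] := by
  congr 1; funext i; fin_cases i <;> rfl

lemma nsw01 (v0 v1 v2 : Fin 6 → ℝ) : ν ![v1, v0, v2] = -ν ![v0, v1, v2] := by
  have h := ν.map_swap (v := ![v0, v1, v2]) (show (0 : Fin 3) ≠ 1 by decide)
  rw [show ![v0, v1, v2] ∘ Equiv.swap (0:Fin 3) 1 = ![v1, v0, v2] from by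
    funext i; fin_cases i <;> simp [Equiv.swap_apply_def]] at h
  exact h

lemma nsw12 (v0 v1 v2 : Fin 6 → ℝ) : ν ![v0, v2, v1] = -ν ![v0, v1, v2] := by
  have h := ν.map_swap (v := ![v0, v1, v2]) (show (1 : Fin 3) ≠ 2 by decide)
  rw [show ![v0, v1, v2] ∘ Equiv.swap (1:Fin 3) 2 = ![v0, v2, v1] from by
    funext i; fin_cases i <;> simp [Equiv.swap_apply_def]] at h
  exact h

lemma ndup01 (a b : Fin 6 → ℝ) : ν ![a, a, b] = 0 :=
  ν.map_eq_zero_of_eq _ (show Matrix.vecCons a ![a,b] 0 = ![a,a,b] 1 from rfl)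
    (show (0:Fin 3) ≠ 1 by decide)
lemma ndup02 (a b : Fin 6 → ℝ) : ν ![a, b, a] = 0 :=
  ν.map_eq_zero_of_eq _ (show ![a,b,a] 0 = ![a,b,a] 2 from rfl) (show (0:Fin 3) ≠ 2 by decide)
lemma ndup12 (a b : Fin 6 → ℝ) : ν ![a, b, b] = 0 :=
  ν.map_eq_zero_of_eq _ (show ![a,b,b] 1 = ![a,b,b] 2 from rfl) (show (1:Fin 3) ≠ 2 by decide)

lemma nperm6 (a b c : Fin 6) (h : ν ![e6v a, e6v b, e6v c] = 0) :
    ν ![e6v a, e6v c, e6v b] = 0 ∧ ν ![e6v b, e6v a, e6v c] = 0 ∧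
      ν ![e6v b, e6v c, e6v a] = 0 ∧ ν ![e6v c, e6v a, e6v b] = 0 ∧
      ν ![e6v c, e6v b, e6v a] = 0 := by
  refine ⟨?_, ?_, ?_, ?_, ?_⟩
  · rw [nsw12 ν (e6v a) (e6v b) (e6v c), h, neg_zero]
  · rw [nsw01 ν (e6v a) (e6v b) (e6v c), h, neg_zero]
  · rw [nsw12 ν (e6v b) (e6v a) (e6v c), nsw01 ν (e6v a) (e6v b) (e6v c), h, neg_zero, neg_zero]
  · rw [nsw01 ν (e6v a) (e6v c) (e6v b), nsw12 ν (e6v a) (e6v b) (e6v c), h, neg_zero, neg_zero]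
  · rw [nsw12 ν (e6v c) (e6v a) (e6v b), nsw01 ν (e6v a) (e6v c) (e6v b),
      nsw12 ν (e6v a) (e6v b) (e6v c), h]; ring

end nuAux

lemma snoc_single (u : Fin 6) :
    (Fin.snoc (Pi.single u (1:ℝ)) 0 : Fin 7 → ℝ) = Pi.single u.castSucc 1 := by
  funext j
  refine Fin.lastCases ?_ (fun i => ?_) j
  · rw [Fin.snoc_last]
    rw [Pi.single_eq_of_ne (by exact (Fin.castSucc_lt_last u).ne') 1]
  · rw [Fin.snoc_castSucc]
    rcases eq_or_ne i u with rfl | h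
    · rw [Pi.single_eq_same, Pi.single_eq_same]
    · have hc : i.castSucc ≠ u.castSucc := fun hc => h (Fin.castSucc_injective 6 hc)
      rw [Pi.single_eq_of_ne h, Pi.single_eq_of_ne hc]

lemma kmat_zero (ν : AlternatingMap ℝ (Fin 6 → ℝ) ℝ (Fin 3))
    (ZW : ∀ u v w : Fin 6, 4 ≤ wtAux u + wtAux v + wtAux w → ν ![e6v u, e6v v, e6v w] = 0)
    (a c : Fin 6) (h7 : 7 ≤ wtAux c + ∑ l : Fin 5, wtAux (a.succAbove l)) :
    kMat (Pi.basisFun ℝ (Fin 6)) ν a c = 0 := by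
  have hb : ∀ i : Fin 6, (Pi.basisFun ℝ (Fin 6)) i = e6v i := fun i => Pi.basisFun_apply ℝ (Fin 6) i
  simp only [kMat, wedgeVal]
  have hsum : (∑ σ : Equiv.Perm (Fin (2 + 3)),
      ((Equiv.Perm.sign σ : ℤ) : ℝ) *
        ((ν.curryLeft ((Pi.basisFun ℝ (Fin 6)) c)) fun i =>
            (fun l : Fin 5 => (Pi.basisFun ℝ (Fin 6)) (a.succAbove l)) (σ (Fin.castAdd 3 i))) *
        (ν fun j => (fun l : Fin 5 => (Pi.basisFun ℝ (Fin 6)) (a.succAbove l)) (σ (Fin.natAdd 2 j)))) = 0 := by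
    refine Finset.sum_eq_zero fun σ _ => ?_
    have hF1 : ((ν.curryLeft ((Pi.basisFun ℝ (Fin 6)) c)) fun i =>
        (fun l : Fin 5 => (Pi.basisFun ℝ (Fin 6)) (a.succAbove l)) (σ (Fin.castAdd 3 i))) =
        ν ![e6v c, e6v (a.succAbove (σ (0:Fin 5))), e6v (a.succAbove (σ (1:Fin 5)))] := by
      rw [AlternatingMap.curryLeft_apply_apply, neta3']
      simp only [Matrix.cons_val_zero, Matrix.cons_val_one, Matrix.head_cons,
        Matrix.cons_val_two, Matrix.tail_cons, hb]
      rfl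
    have hF2 : (ν fun j => (fun l : Fin 5 => (Pi.basisFun ℝ (Fin 6)) (a.succAbove l))
        (σ (Fin.natAdd 2 j))) =
        ν ![e6v (a.succAbove (σ (2:Fin 5))), e6v (a.succAbove (σ (3:Fin 5))), e6v (a.succAbove (σ (4:Fin 5)))] := by
      rw [neta3']
      simp only [hb]
      rfl
    rw [hF1, hF2]
    have hs : (∑ l : Fin 5, wtAux (a.succAbove (σ l))) = ∑ l : Fin 5, wtAux (a.succAbove l) :=
      Equiv.sum_comp (σ : Equiv.Perm (Fin 5)) (fun l => wtAux (a.succAbove l))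
    simp only [Fin.sum_univ_five] at hs h7
    by_cases h4 : 4 ≤ wtAux c + wtAux (a.succAbove (σ (0:Fin 5))) + wtAux (a.succAbove (σ (1:Fin 5)))
    · rw [ZW _ _ _ h4]; ring
    · rw [ZW _ _ _ (show 4 ≤ wtAux (a.succAbove (σ (2:Fin 5))) + wtAux (a.succAbove (σ (3:Fin 5))) +
        wtAux (a.succAbove (σ (4:Fin 5))) by omega)]; ring
  rw [hsum, mul_zero, mul_zero]

/-- On `l₁ = (0,0,0,12,13−24,14+23,0)`, for the 3-form
`ν = −π_*(ι_{e₇} τ)` on the 6-dimensional quotient `l₁/⟨e₇⟩ ≅ ℝ⁶` obtained from any closed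
4-form `τ`, the matrix of the Hitchin endomorphism `K_ν` satisfies `K_ν(a,b) = 0` for
`a ∈ {1,2}`, `b ≥ 3`, and for `a ∈ {3,4}`, `b ∈ {5,6}` (1-based indices); in particular
`span(e₃,e₄,e₅,e₆)` is invariant under the almost complex structure
`J_ν = K_ν / √(−λ(ν))` whenever `ν` is negative stable. -/
theorem l1_K_matrix_block_triangular
    (τ : AlternatingMap ℝ (Fin 7 → ℝ) ℝ (Fin 4))
    (hτ : ∀ x : Fin 5 → (Fin 7 → ℝ), ceDVal brkL1 τ x = 0)
    (ν : AlternatingMap ℝ (Fin 6 → ℝ) ℝ (Fin 3))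
    (hν : ∀ y : Fin 3 → (Fin 6 → ℝ),
      ν y = -((τ.curryLeft (Pi.single 6 1)) fun i => Fin.snoc (y i) 0)) :
    (∀ a c : Fin 6, (a : ℕ) < 2 → 2 ≤ (c : ℕ) →
      kMat (Pi.basisFun ℝ (Fin 6)) ν a c = 0) ∧
    (∀ a c : Fin 6, ((a : ℕ) = 2 ∨ (a : ℕ) = 3) → 4 ≤ (c : ℕ) →
      kMat (Pi.basisFun ℝ (Fin 6)) ν a c = 0) ∧
    (lambdaB (Pi.basisFun ℝ (Fin 6)) ν < 0 →
      ∀ a c : Fin 6, (a : ℕ) < 2 → 2 ≤ (c : ℕ) →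
        (Real.sqrt (-(lambdaB (Pi.basisFun ℝ (Fin 6)) ν)))⁻¹ *
          kMat (Pi.basisFun ℝ (Fin 6)) ν a c = 0) := by
  -- closedness equations, sorted form
  have t145 : Tv τ 1 4 5 = 0 := by
    have := auxeqA τ hτ; linarith [tvsw1 τ 1 5 4, tvsw2 τ 1 4 5]
  have t045 : Tv τ 0 4 5 = 0 := by
    have := auxeqB τ hτ; linarith [tvsw1 τ 0 4 5]
  have t245 : Tv τ 2 4 5 = 0 := by
    have := auxeqE τ hτ; linarith [tvsw1 τ 2 5 4, tvsw2 τ 2 4 5]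
  have t345 : Tv τ 3 4 5 = 0 := by
    have := auxeqF τ hτ; linarith [tvsw1 τ 3 4 5]
  have t234 : Tv τ 2 3 4 = 0 := by
    have := auxeqC τ hτ; linarith [tvsw1 τ 2 3 4, tvsw1 τ 0 5 4, tvsw2 τ 0 4 5, t045]
  have t235 : Tv τ 2 3 5 = 0 := by
    have := auxeqD τ hτ; linarith [tvsw1 τ 2 3 5, tvsw1 τ 1 4 5, t145]
  -- transfer to ν
  have hsnoc : ∀ u v w : Fin 6, (fun i => Fin.snoc (![e6v u, e6v v, e6v w] i) (0:ℝ)) =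
      ![e7v u.castSucc, e7v v.castSucc, e7v w.castSucc] := by
    intro u v w; funext i
    fin_cases i <;> simp [e6v, e7v, snoc_single]
  have hNT : ∀ u v w : Fin 6, ν ![e6v u, e6v v, e6v w] =
      Tv τ u.castSucc v.castSucc w.castSucc := by
    intro u v w
    rw [hν ![e6v u, e6v v, e6v w], hsnoc u v w, AlternatingMap.curryLeft_apply_apply]
    rw [show (Matrix.vecCons (Pi.single 6 1) ![e7v u.castSucc, e7v v.castSucc, e7v w.castSucc])
        = ![e7v 6, e7v u.castSucc, e7v v.castSucc, e7v w.castSucc] from rfl]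
    rw [t6front τ]
    simp [Tv]
  have n145 : ν ![e6v 1, e6v 4, e6v 5] = 0 := by rw [hNT]; exact t145
  have n045 : ν ![e6v 0, e6v 4, e6v 5] = 0 := by rw [hNT]; exact t045
  have n245 : ν ![e6v 2, e6v 4, e6v 5] = 0 := by rw [hNT]; exact t245
  have n345 : ν ![e6v 3, e6v 4, e6v 5] = 0 := by rw [hNT]; exact t345
  have n234 : ν ![e6v 2, e6v 3, e6v 4] = 0 := by rw [hNT]; exact t234
  have n235 : ν ![e6v 2, e6v 3, e6v 5] = 0 := by rw [hNT]; exact t235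
  obtain ⟨p1a, p1b, p1c, p1d, p1e⟩ := nperm6 ν 1 4 5 n145
  obtain ⟨p2a, p2b, p2c, p2d, p2e⟩ := nperm6 ν 0 4 5 n045
  obtain ⟨p3a, p3b, p3c, p3d, p3e⟩ := nperm6 ν 2 4 5 n245
  obtain ⟨p4a, p4b, p4c, p4d, p4e⟩ := nperm6 ν 3 4 5 n345
  obtain ⟨p5a, p5b, p5c, p5d, p5e⟩ := nperm6 ν 2 3 4 n234
  obtain ⟨p6a, p6b, p6c, p6d, p6e⟩ := nperm6 ν 2 3 5 n235
  have ZW : ∀ u v w : Fin 6, 4 ≤ wtAux u + wtAux v + wtAux w → ν ![e6v u, e6v v, e6v w] = 0 := by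
    intro u v w hw
    fin_cases u <;> fin_cases v <;> fin_cases w <;>
      first
        | exact absurd hw (by decide)
        | assumption
        | exact ndup01 ν _ _
        | exact ndup02 ν _ _
        | exact ndup12 ν _ _
  have key1 : ∀ a c : Fin 6, (a:ℕ) < 2 → 2 ≤ (c:ℕ) →
      7 ≤ wtAux c + ∑ l : Fin 5, wtAux (a.succAbove l) := by decide
  have key2 : ∀ a c : Fin 6, ((a:ℕ) = 2 ∨ (a:ℕ) = 3) → 4 ≤ (c:ℕ) →
      7 ≤ wtAux c + ∑ l : Fin 5, wtAux (a.succAbove l) := by decide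
  refine ⟨fun a c ha hc => kmat_zero ν ZW a c (key1 a c ha hc),
    fun a c ha hc => kmat_zero ν ZW a c (key2 a c ha hc),
    fun _ a c ha hc => ?_⟩
  rw [kmat_zero ν ZW a c (key1 a c ha hc), mul_zero]


end
end
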